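/- arXiv:2008.08654 — 11 statements merged into one kernel-verified Lean document; each statement's English description precedes it below -/
import Mathlib

section
/- Let p = 2^b − 1 and 1 ≤ ℓ < b. Let h : [u] → [p] be a k-universal random hash function, and define i(x) = h(x) mod 2^ℓ, a(x) = ⌊h(x)/2^{b−1}⌋, s(x) = 1 − 2·a(x). Then for any j ≤ k distinct keys x₀,...,x_{j−1} ∈ [u] and any real-valued function A of (i(x₀),...,i(x_{j−1}), s(x₁),...,s(x_{j−1})) (i.e., A does not depend on s(x₀)): E[s(x₀)·A] = E[A | i(x₀) = 2^ℓ − 1]/p. -/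
open MeasureTheory ProbabilityTheory

lemma mersenne_mod (b ℓ : ℕ) (h1 : 1 ≤ ℓ) (hlb : ℓ < b) :
    (2 ^ b - 1) % 2 ^ ℓ = 2 ^ ℓ - 1 := by
  obtain ⟨d, hd⟩ : (2:ℕ)^ℓ ∣ 2^b := pow_dvd_pow 2 hlb.le
  have hd1 : 1 ≤ d := by
    rcases Nat.eq_zero_or_pos d with h0 | h
    · subst h0; rw [Nat.mul_zero] at hd; have := Nat.two_pow_pos b; omega
    · exact h
  have hℓpos : 1 ≤ (2:ℕ)^ℓ := Nat.one_le_two_pow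
  have key : 2 ^ b - 1 = 2^ℓ * (d - 1) + (2^ℓ - 1) := by
    have h2 : 2^ℓ * d = 2^ℓ * (d-1) + 2^ℓ := by
      conv_lhs => rw [(by omega : d = (d-1) + 1)]
      rw [Nat.mul_succ]
    omega
  rw [key, Nat.mul_add_mod, Nat.mod_eq_of_lt (by omega)]

lemma mySignSum (b ℓ p : ℕ) (hp : p = 2 ^ b - 1) (h1 : 1 ≤ ℓ) (hlb : ℓ < b) (g : ℕ → ℝ) :
    ∑ v : Fin p, (1 - 2 * (((v : ℕ) / 2 ^ (b - 1) : ℕ) : ℝ)) * g ((v : ℕ) % 2 ^ ℓ)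
      = g (2 ^ ℓ - 1) := by
  set F : ℕ → ℝ := fun v => (1 - 2 * ((v / 2 ^ (b - 1) : ℕ) : ℝ)) * g (v % 2 ^ ℓ) with hF
  have hb : 1 ≤ b := le_trans h1 hlb.le
  have hm : (2:ℕ)^b = 2^(b-1) + 2^(b-1) := by
    conv_lhs => rw [(by omega : b = (b-1) + 1)]
    rw [pow_succ]; omega
  have hdvd : (2:ℕ)^ℓ ∣ 2^(b-1) := pow_dvd_pow 2 (by omega)
  obtain ⟨c, hc⟩ := hdvd
  have hzero : ∑ v ∈ Finset.range (2^b), F v = 0 := by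
    rw [hm, Finset.range_eq_Ico, ← Finset.sum_Ico_consecutive F (Nat.zero_le _) (by omega : 2^(b-1) ≤ 2^(b-1) + 2^(b-1))]
    have h2 : ∑ x ∈ Finset.Ico (2^(b-1)) (2^(b-1)+2^(b-1)), F x = ∑ x ∈ Finset.range (2^(b-1)), F (2^(b-1)+x) := by
      rw [Finset.sum_Ico_eq_sum_range]; simp
    have h3 : Finset.Ico 0 (2^(b-1)) = Finset.range (2^(b-1)) := by rw [Finset.range_eq_Ico]
    rw [h2, h3, ← Finset.sum_add_distrib]
    apply Finset.sum_eq_zero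
    intro v hv
    have hvlt : v < 2^(b-1) := Finset.mem_range.mp hv
    have e1 : v / 2^(b-1) = 0 := Nat.div_eq_of_lt hvlt
    have e2 : (2^(b-1) + v) / 2^(b-1) = 1 := by
      rw [add_comm, Nat.add_div_right _ (by positivity), e1]
    have e3 : (2^(b-1) + v) % 2^ℓ = v % 2^ℓ := by
      rw [hc, Nat.mul_add_mod]
    simp only [hF, e1, e2, e3]
    push_cast
    ring
  have hlast : F (2^b - 1) = - g (2^ℓ - 1) := by
    have e1 : (2^b - 1) / 2^(b-1) = 1 := by
      have hpos : 1 ≤ (2:ℕ)^(b-1) := Nat.one_le_two_pow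
      exact Nat.div_eq_of_lt_le (by omega) (by omega)
    have e2 : (2^b - 1) % 2^ℓ = 2^ℓ - 1 := mersenne_mod b ℓ h1 hlb
    simp only [hF, e1, e2]
    push_cast
    ring
  have hsplit : ∑ v ∈ Finset.range (2^b), F v = (∑ v ∈ Finset.range (2^b - 1), F v) + F (2^b - 1) := by
    conv_lhs => rw [(by have := Nat.one_le_two_pow (n := b); omega : (2:ℕ)^b = (2^b - 1) + 1)]
    rw [Finset.sum_range_succ]
  have : ∑ v ∈ Finset.range p, F v = g (2^ℓ - 1) := by
    rw [hp]
    have := hzero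
    rw [hsplit] at this
    rw [hlast] at this
    linarith
  rw [Fin.sum_univ_eq_sum_range F p] at *
  exact this

/-- Lemma 1 (sign near cancellation for Mersenne primes): with `p = 2^b - 1`,
`1 ≤ ℓ < b`, `h : [u] → [p]` a `k`-universal random hash function,
`i(x) = h(x) mod 2^ℓ`, `s(x) = 1 - 2⌊h(x)/2^(b-1)⌋`, for any `j ≤ k` distinct keys
`x₀, ..., x_{j-1}` and any real-valued function `A` of
`(i(x₀), ..., i(x_{j-1}), s(x₁), ..., s(x_{j-1}))` (not depending on `s(x₀)`):
`E[s(x₀)·A] = E[A | i(x₀) = 2^ℓ - 1] / p`. -/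
theorem stmt1
    {Ω : Type*} [MeasureSpace Ω] [IsProbabilityMeasure (ℙ : Measure Ω)]
    (b ℓ u p k : ℕ) (hp : p = 2 ^ b - 1) (hℓ1 : 1 ≤ ℓ) (hℓb : ℓ < b)
    (h : Ω → Fin u → Fin p)
    (hmeas : ∀ x : Fin u, Measurable fun ω => h ω x)
    (huniv : ∀ j : ℕ, j ≤ k → ∀ x : Fin j → Fin u, Function.Injective x →
      ∀ y : Fin j → Fin p,
        ℙ {ω | ∀ m : Fin j, h ω (x m) = y m} = (p : ENNReal)⁻¹ ^ j)
    (i : Ω → Fin u → ℕ) (hi : ∀ ω x, i ω x = (h ω x : ℕ) % 2 ^ ℓ)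
    (s : Ω → Fin u → ℝ)
    (hs : ∀ ω x, s ω x = 1 - 2 * (((h ω x : ℕ) / 2 ^ (b - 1) : ℕ) : ℝ))
    (j : ℕ) (hj : j ≤ k) (hj0 : 0 < j)
    (x : Fin j → Fin u) (hx : Function.Injective x)
    (A : (Fin j → ℕ) → (Fin j → ℝ) → ℝ)
    (hA : ∀ (iv : Fin j → ℕ) (sv sv' : Fin j → ℝ),
      (∀ m : Fin j, m ≠ ⟨0, hj0⟩ → sv m = sv' m) → A iv sv = A iv sv') :
    ∫ ω, s ω (x ⟨0, hj0⟩) * A (fun m => i ω (x m)) (fun m => s ω (x m)) =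
      ((∫ ω in {ω | i ω (x ⟨0, hj0⟩) = 2 ^ ℓ - 1},
          A (fun m => i ω (x m)) (fun m => s ω (x m))) /
        (ℙ {ω | i ω (x ⟨0, hj0⟩) = 2 ^ ℓ - 1}).toReal) / (p : ℝ) := by
  classical
  set z0 : Fin j := ⟨0, hj0⟩ with hz0
  have hb2 : 2 ≤ b := by omega
  have hppos : 0 < p := by
    have : (2:ℕ)^2 ≤ 2^b := Nat.pow_le_pow_right (by norm_num) hb2
    omega
  have hpR : (0:ℝ) < (p:ℝ) := by exact_mod_cast hppos
  -- the random vector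
  set Y : Ω → (Fin j → Fin p) := fun ω m => h ω (x m) with hY
  have hYm : Measurable Y := measurable_pi_iff.mpr fun m => hmeas (x m)
  have hmap : ∀ y : Fin j → Fin p, (Measure.map Y ℙ) {y} = (p : ENNReal)⁻¹ ^ j := by
    intro y
    rw [Measure.map_apply hYm (measurableSet_singleton y)]
    have hset : Y ⁻¹' {y} = {ω | ∀ m : Fin j, h ω (x m) = y m} := by
      ext ω; simp [hY, funext_iff]
    rw [hset]; exact huniv j hj x hx y
  set c : ℝ := ((p:ℝ)⁻¹)^j with hc
  have key : ∀ G : (Fin j → Fin p) → ℝ,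
      ∫ ω, G (Y ω) = ∑ y : Fin j → Fin p, c * G y := by
    intro G
    haveI : IsProbabilityMeasure (Measure.map Y ℙ) := Measure.isProbabilityMeasure_map hYm.aemeasurable
    have h1 : ∫ ω, G (Y ω) = ∫ y, G y ∂(Measure.map Y ℙ) :=
      (integral_map hYm.aemeasurable
        (Measurable.of_discrete (f := G)).aestronglyMeasurable).symm
    rw [h1, integral_fintype (Integrable.of_finite)]
    refine Finset.sum_congr rfl fun y _ => ?_
    rw [measureReal_def, hmap y, smul_eq_mul]
    congr 1
    rw [hc]
    simp
  -- measurability of the conditioning set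
  have hmi : Measurable fun ω => i ω (x z0) := by
    have he : (fun ω => i ω (x z0))
        = (fun v : Fin p => (v:ℕ) % 2^ℓ) ∘ (fun ω => h ω (x z0)) :=
      funext fun ω => by simp [hi]
    rw [he]; exact Measurable.of_discrete.comp (hmeas _)
  have hSm : MeasurableSet {ω | i ω (x z0) = 2^ℓ - 1} :=
    hmi (measurableSet_singleton _)
  -- the three integrals as sums
  have hLHS : (∫ ω, s ω (x z0) * A (fun m => i ω (x m)) (fun m => s ω (x m)))
      = ∑ y : Fin j → Fin p, c *
          ((1 - 2 * (((y z0 : ℕ) / 2^(b-1) : ℕ) : ℝ)) *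
            A (fun m => (y m : ℕ) % 2^ℓ)
              (fun m => 1 - 2 * (((y m : ℕ) / 2^(b-1) : ℕ) : ℝ))) := by
    rw [← key]
    refine congrArg _ (funext fun ω => ?_)
    simp only [hi, hs, hY]
  have hTI : (∫ ω in {ω | i ω (x z0) = 2^ℓ - 1},
        A (fun m => i ω (x m)) (fun m => s ω (x m)))
      = ∑ y : Fin j → Fin p, c *
          (if (y z0 : ℕ) % 2^ℓ = 2^ℓ - 1 then
            A (fun m => (y m : ℕ) % 2^ℓ)
              (fun m => 1 - 2 * (((y m : ℕ) / 2^(b-1) : ℕ) : ℝ)) else 0) := by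
    rw [← integral_indicator hSm, ← key]
    refine congrArg _ (funext fun ω => ?_)
    rw [Set.indicator_apply]
    simp only [Set.mem_setOf_eq, hi, hs, hY]
  have hPI : (ℙ {ω | i ω (x z0) = 2^ℓ - 1}).toReal
      = ∑ y : Fin j → Fin p, c *
          (if (y z0 : ℕ) % 2^ℓ = 2^ℓ - 1 then (1:ℝ) else 0) := by
    have h2 := integral_indicator_const (μ := ℙ) (1:ℝ) hSm
    rw [smul_eq_mul, mul_one, measureReal_def] at h2
    rw [← h2, ← key]
    refine congrArg _ (funext fun ω => ?_)
    rw [Set.indicator_apply]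
    simp only [Set.mem_setOf_eq, hi, hY]
  -- split off coordinate z0
  set e := Equiv.funSplitAt z0 (Fin p) with he
  set B : ({m : Fin j // m ≠ z0} → Fin p) → ℕ → ℝ := fun g r =>
    A (fun m => if hm : m = z0 then r else ((g ⟨m, hm⟩ : ℕ) % 2^ℓ))
      (fun m => if hm : m = z0 then 0
        else (1 - 2 * (((g ⟨m, hm⟩ : ℕ) / 2^(b-1) : ℕ) : ℝ))) with hB
  have hz0e : ∀ (v : Fin p) (g : {m : Fin j // m ≠ z0} → Fin p),
      e.symm (v, g) z0 = v := by
    intro v g; simp [he, Equiv.funSplitAt_symm_apply]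
  have hAB : ∀ (v : Fin p) (g : {m : Fin j // m ≠ z0} → Fin p),
      A (fun m => ((e.symm (v, g)) m : ℕ) % 2^ℓ)
        (fun m => 1 - 2 * ((((e.symm (v, g)) m : ℕ) / 2^(b-1) : ℕ) : ℝ))
      = B g ((v : ℕ) % 2^ℓ) := by
    intro v g
    have hiv : (fun m => ((e.symm (v, g)) m : ℕ) % 2^ℓ)
        = (fun m => if hm : m = z0 then (v:ℕ) % 2^ℓ
            else ((g ⟨m, hm⟩ : ℕ) % 2^ℓ)) := by
      funext m
      by_cases hm : m = z0 <;> simp [he, Equiv.funSplitAt_symm_apply, hm]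
    rw [hB, hiv]
    refine hA _ _ _ fun m hm => ?_
    simp [he, Equiv.funSplitAt_symm_apply, hm]
  -- generic reindexing
  have hre : ∀ F : (Fin j → Fin p) → ℝ,
      ∑ y : Fin j → Fin p, F y
        = ∑ g : {m : Fin j // m ≠ z0} → Fin p, ∑ v : Fin p, F (e.symm (v, g)) := by
    intro F
    rw [← Equiv.sum_comp e.symm F, Fintype.sum_prod_type]
    exact Finset.sum_comm
  set t : ℕ := (Finset.univ.filter (fun v : Fin p => (v:ℕ) % 2^ℓ = 2^ℓ - 1)).card with ht
  have htpos : 0 < t := by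
    rw [ht]
    apply Finset.card_pos.mpr
    have hlt : 2^ℓ - 1 < p := by
      have h1 : (2:ℕ)^ℓ < 2^b := Nat.pow_lt_pow_right (by norm_num) hℓb
      have h2 : 1 ≤ (2:ℕ)^ℓ := Nat.one_le_two_pow
      omega
    refine ⟨⟨2^ℓ - 1, hlt⟩, ?_⟩
    simp [Nat.mod_eq_of_lt (by have : 1 ≤ (2:ℕ)^ℓ := Nat.one_le_two_pow; omega : 2^ℓ - 1 < 2^ℓ)]
  set N : ℕ := Fintype.card ({m : Fin j // m ≠ z0} → Fin p) with hN
  have hNval : N = p ^ (j - 1) := by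
    rw [hN, Fintype.card_fun]
    congr 1
    · exact Fintype.card_fin p
    · rw [Fintype.card_subtype_compl, Fintype.card_subtype_eq, Fintype.card_fin]
  set C : ℝ := ∑ g : {m : Fin j // m ≠ z0} → Fin p, B g (2^ℓ - 1) with hC
  -- compute the three sums
  have hsum1 : ∑ y : Fin j → Fin p,
      ((1 - 2 * (((y z0 : ℕ) / 2^(b-1) : ℕ) : ℝ)) *
        A (fun m => (y m : ℕ) % 2^ℓ)
          (fun m => 1 - 2 * (((y m : ℕ) / 2^(b-1) : ℕ) : ℝ))) = C := by
    rw [hre]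
    refine Finset.sum_congr rfl fun g _ => ?_
    have : ∀ v : Fin p,
        (1 - 2 * ((((e.symm (v, g)) z0 : ℕ) / 2^(b-1) : ℕ) : ℝ)) *
          A (fun m => ((e.symm (v, g)) m : ℕ) % 2^ℓ)
            (fun m => 1 - 2 * ((((e.symm (v, g)) m : ℕ) / 2^(b-1) : ℕ) : ℝ))
        = (1 - 2 * (((v : ℕ) / 2^(b-1) : ℕ) : ℝ)) * B g ((v:ℕ) % 2^ℓ) := by
      intro v; rw [hz0e, hAB]
    rw [Finset.sum_congr rfl fun v _ => this v]
    exact mySignSum b ℓ p hp hℓ1 hℓb (B g)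
  have hsum2 : ∑ y : Fin j → Fin p,
      (if (y z0 : ℕ) % 2^ℓ = 2^ℓ - 1 then
        A (fun m => (y m : ℕ) % 2^ℓ)
          (fun m => 1 - 2 * (((y m : ℕ) / 2^(b-1) : ℕ) : ℝ)) else 0) = t * C := by
    rw [hre]
    have hg : ∀ g : {m : Fin j // m ≠ z0} → Fin p,
        ∑ v : Fin p, (if ((e.symm (v, g)) z0 : ℕ) % 2^ℓ = 2^ℓ - 1 then
          A (fun m => ((e.symm (v, g)) m : ℕ) % 2^ℓ)
            (fun m => 1 - 2 * ((((e.symm (v, g)) m : ℕ) / 2^(b-1) : ℕ) : ℝ)) else 0)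
        = t * B g (2^ℓ - 1) := by
      intro g
      have hterm : ∀ v : Fin p,
          (if ((e.symm (v, g)) z0 : ℕ) % 2^ℓ = 2^ℓ - 1 then
            A (fun m => ((e.symm (v, g)) m : ℕ) % 2^ℓ)
              (fun m => 1 - 2 * ((((e.symm (v, g)) m : ℕ) / 2^(b-1) : ℕ) : ℝ)) else 0)
          = (if (v : ℕ) % 2^ℓ = 2^ℓ - 1 then B g (2^ℓ - 1) else 0) := by
        intro v
        rw [hz0e, hAB]
        by_cases hv : (v : ℕ) % 2^ℓ = 2^ℓ - 1
        · rw [if_pos hv, if_pos hv, hv]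
        · rw [if_neg hv, if_neg hv]
      rw [Finset.sum_congr rfl fun v _ => hterm v, ← Finset.sum_filter,
        Finset.sum_const, ← ht, nsmul_eq_mul]
    rw [Finset.sum_congr rfl fun g _ => hg g, ← Finset.mul_sum, ← hC]
  have hsum3 : ∑ y : Fin j → Fin p,
      (if (y z0 : ℕ) % 2^ℓ = 2^ℓ - 1 then (1:ℝ) else 0) = (N : ℝ) * t := by
    rw [hre]
    have hg : ∀ g : {m : Fin j // m ≠ z0} → Fin p,
        ∑ v : Fin p, (if ((e.symm (v, g)) z0 : ℕ) % 2^ℓ = 2^ℓ - 1 then (1:ℝ) else 0)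
          = (t : ℝ) := by
      intro g
      have hterm : ∀ v : Fin p,
          (if ((e.symm (v, g)) z0 : ℕ) % 2^ℓ = 2^ℓ - 1 then (1:ℝ) else 0)
          = (if (v : ℕ) % 2^ℓ = 2^ℓ - 1 then (1:ℝ) else 0) := by
        intro v; rw [hz0e]
      rw [Finset.sum_congr rfl fun v _ => hterm v, ← Finset.sum_filter,
        Finset.sum_const, ← ht, nsmul_eq_mul, mul_one]
    rw [Finset.sum_congr rfl fun g _ => hg g, Finset.sum_const, nsmul_eq_mul]
    rfl
  -- put everything together
  rw [hLHS, hTI, hPI, ← Finset.mul_sum, ← Finset.mul_sum, ← Finset.mul_sum,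
    hsum1, hsum2, hsum3]
  have htR : (0:ℝ) < (t:ℝ) := by exact_mod_cast htpos
  have hcpos : (0:ℝ) < c := by rw [hc]; positivity
  have hNpj : c * ((N:ℝ) * (p:ℝ)) = 1 := by
    rw [hc, hNval]
    push_cast
    rw [← pow_succ]
    have hj1 : j - 1 + 1 = j := by omega
    rw [hj1, inv_pow, inv_mul_cancel₀ (by positivity)]
  have hN0 : (0:ℝ) < (N:ℝ) := by
    have : 0 < N := by rw [hNval]; exact pow_pos hppos _
    exact_mod_cast this
  have hden : (c * ((N:ℝ) * (t:ℝ))) * (p:ℝ) ≠ 0 :=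
    ne_of_gt (mul_pos (mul_pos hcpos (mul_pos hN0 htR)) hpR)
  rw [div_div, eq_div_iff hden]
  have : c * C * (c * ((N:ℝ) * (t:ℝ)) * (p:ℝ)) = (c * ((N:ℝ) * (p:ℝ))) * (c * ((t:ℝ) * C)) := by
    ring
  rw [this, hNpj, one_mul]
end

section
/- Let r and b be positive integers. The map v ↦ ⌊v·r/2^b⌋ from [2^b] to [r] (well-defined when r ≤ 2^b) is most uniform: for every i ∈ [r], the number of v ∈ [2^b] with ⌊v·r/2^b⌋ = i is either ⌊2^b/r⌋ or ⌈2^b/r⌉. -/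
private lemma lt_div_succ_mul (a b : ℕ) (hb : 0 < b) : a < (a / b + 1) * b := by
  have h1 := Nat.div_add_mod a b
  have h2 := Nat.mod_lt a hb
  have h3 : (a / b + 1) * b = b * (a / b) + b := by ring
  omega

private lemma ceil_le_iff {r x v : ℕ} (hr : 0 < r) :
    (x + r - 1) / r ≤ v ↔ x ≤ r * v := by
  rw [Nat.div_le_iff_le_mul_add_pred hr]
  omega

/-- Lemma 2 (i): for positive integers `r` and `b` with `r ≤ 2^b`, the map
`v ↦ ⌊v·r/2^b⌋` is a most uniform map from `[2^b]` to `[r]`: every `i ∈ [r]` has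
either `⌊2^b/r⌋` or `⌈2^b/r⌉ = (2^b + r - 1)/r` preimages. -/
theorem stmt2 (r b : ℕ) (hr : 0 < r) (hb : 0 < b) (hrb : r ≤ 2 ^ b) :
    ∀ i < r,
      ((Finset.range (2 ^ b)).filter fun v => v * r / 2 ^ b = i).card = 2 ^ b / r ∨
      ((Finset.range (2 ^ b)).filter fun v => v * r / 2 ^ b = i).card
        = (2 ^ b + r - 1) / r := by
  intro i hi
  set N := 2 ^ b with hN
  have hN0 : 0 < N := Nat.pow_pos (by norm_num)
  set c : ℕ → ℕ := fun j => (j * N + r - 1) / r with hc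
  -- the ceiling value c (i+1) is at most N
  have hcN : c (i + 1) ≤ N := by
    rw [hc]
    rw [ceil_le_iff hr]
    calc (i + 1) * N ≤ r * N := by
          exact Nat.mul_le_mul_right N (by omega)
      _ = r * N := rfl
  have hfilter : (Finset.range N).filter (fun v => v * r / N = i)
      = Finset.Ico (c i) (c (i + 1)) := by
    ext v
    simp only [Finset.mem_filter, Finset.mem_range, Finset.mem_Ico]
    have hlo : c i ≤ v ↔ i * N ≤ v * r := by
      rw [hc, ceil_le_iff hr, Nat.mul_comm r v]
    have hhi : v < c (i + 1) ↔ v * r < (i + 1) * N := by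
      rw [← Nat.not_le, ← Nat.not_le, hc, ceil_le_iff hr, Nat.mul_comm r v]
    constructor
    · rintro ⟨hv, hdiv⟩
      subst hdiv
      exact ⟨hlo.mpr (Nat.div_mul_le_self _ _),
        hhi.mpr (lt_div_succ_mul _ _ hN0)⟩
    · rintro ⟨h1, h2⟩
      have hlt : v * r < (i + 1) * N := hhi.mp h2
      have hge : i * N ≤ v * r := hlo.mp h1
      refine ⟨?_, Nat.div_eq_of_lt_le hge hlt⟩
      exact lt_of_lt_of_le h2 hcN
  rw [hfilter, Nat.card_Ico]
  -- arithmetic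
  set q1 := c i with hq1
  set q2 := c (i + 1) with hq2
  set q0 := N / r with hq0
  set q3 := (N + r - 1) / r with hq3
  have hq1a : i * N ≤ r * q1 := (ceil_le_iff hr).mp le_rfl
  have hq1b : r * q1 ≤ i * N + r - 1 := by
    rw [Nat.mul_comm]; exact Nat.div_mul_le_self _ _
  have hq2a : (i + 1) * N ≤ r * q2 := (ceil_le_iff hr).mp le_rfl
  have hq2b : r * q2 ≤ (i + 1) * N + r - 1 := by
    rw [Nat.mul_comm]; exact Nat.div_mul_le_self _ _
  have hq0a : r * q0 ≤ N := by rw [Nat.mul_comm]; exact Nat.div_mul_le_self _ _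
  have hq0b : N < r * (q0 + 1) := by
    rw [Nat.mul_comm]; exact lt_div_succ_mul _ _ hr
  have hq3a : N ≤ r * q3 := (ceil_le_iff hr).mp le_rfl
  have hq3b : r * q3 ≤ N + r - 1 := by
    rw [Nat.mul_comm]; exact Nat.div_mul_le_self _ _
  have hiN : i * N + N = (i + 1) * N := by ring
  have h12 : q1 ≤ q2 := by
    refine Nat.le_of_mul_le_mul_left ?_ hr
    omega
  have hD : r * (q2 - q1) + r * q1 = r * q2 := by
    rw [← Nat.mul_add]
    congr 1
    omega
  have hDlo : N - r + 1 ≤ r * (q2 - q1) := by omega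
  have hDhi : r * (q2 - q1) ≤ N + r - 1 := by omega
  have hle : q0 ≤ q2 - q1 := by
    by_contra h
    push_neg at h
    have h1 : r * (q2 - q1 + 1) ≤ r * q0 := Nat.mul_le_mul_left r (by omega)
    have h2 : r * (q2 - q1 + 1) = r * (q2 - q1) + r := by ring
    omega
  have hge : q2 - q1 ≤ q3 := by
    by_contra h
    push_neg at h
    have h1 : r * (q3 + 1) ≤ r * (q2 - q1) := Nat.mul_le_mul_left r (by omega)
    have h2 : r * (q3 + 1) = r * q3 + r := by ring
    omega
  have h03 : q0 ≤ q3 := Nat.le_of_mul_le_mul_left (le_trans hq0a hq3a) hr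
  have h30 : q3 ≤ q0 + 1 := by
    have := Nat.lt_of_mul_lt_mul_left (a := r) (show r * q3 < r * (q0 + 2) by
      have : r * (q0 + 2) = r * (q0 + 1) + r := by ring
      omega)
    omega
  omega
end

section
/- Let r and b be positive integers with r ≤ 2^b. The map v ↦ ⌊v·r/2^b⌋ restricted to the domain {1, 2, ..., 2^b − 1} is most uniform into [r]: for every i ∈ [r], the number of v ∈ {1,...,2^b − 1} with ⌊v·r/2^b⌋ = i is either ⌊(2^b − 1)/r⌋ or ⌈(2^b − 1)/r⌉. -/
private lemma ceil_le_aux (r m v : ℕ) (hr : 0 < r) : (m + r - 1) / r ≤ v ↔ m ≤ v * r := by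
  rw [Nat.div_le_iff_le_mul_add_pred hr, Nat.mul_comm r v]
  omega

private lemma div1_aux (r m : ℕ) (hr : 0 < r) (h1 : r ≤ m) (h2 : m < 2 * r) : m / r = 1 := by
  rw [Nat.div_eq_sub_div hr h1, Nat.div_eq_of_lt (by omega)]

private lemma addmul_div_aux (r a c : ℕ) (hr : 0 < r) (h : a < r) : (a + c * r) / r = c := by
  rw [Nat.add_mul_div_right _ _ hr, Nat.div_eq_of_lt h, Nat.zero_add]

private lemma fval_aux (r q s k : ℕ) (hr : 0 < r) :
    (k * (r * q + s) + r - 1) / r = k * q + (k * s + r - 1) / r := by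
  have h1 : k * (r * q + s) + r - 1 = (k * s + r - 1) + (k * q) * r := by
    have h2 : k * (r * q + s) = (k * q) * r + k * s := by ring
    omega
  rw [h1, Nat.add_mul_div_right _ _ hr, Nat.add_comm]

private lemma fiber_eq_aux (r N i : ℕ) (hr : 0 < r) (hN : 0 < N) (hi : i < r) :
    (Finset.Ioo 0 N).filter (fun v => v * r / N = i)
      = Finset.Ico (max 1 ((i * N + r - 1) / r)) (((i + 1) * N + r - 1) / r) := by
  ext v
  simp only [Finset.mem_filter, Finset.mem_Ioo, Finset.mem_Ico, max_le_iff]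
  constructor
  · rintro ⟨⟨hv0, hvN⟩, hdiv⟩
    refine ⟨⟨hv0, ?_⟩, ?_⟩
    · rw [ceil_le_aux _ _ _ hr]
      calc i * N = v * r / N * N := by rw [hdiv]
      _ ≤ v * r := Nat.div_mul_le_self _ _
    · by_contra hcon
      push_neg at hcon
      rw [ceil_le_aux _ _ _ hr] at hcon
      have : i + 1 ≤ v * r / N := (Nat.le_div_iff_mul_le hN).mpr hcon
      omega
  · rintro ⟨⟨hv1, hfi⟩, hfi1⟩
    rw [ceil_le_aux _ _ _ hr] at hfi
    have hlt : v * r < (i + 1) * N := by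
      by_contra hcon
      push_neg at hcon
      rw [← ceil_le_aux _ _ _ hr] at hcon
      omega
    have hvN : v < N := by
      have hle : ((i + 1) * N + r - 1) / r ≤ N := by
        rw [ceil_le_aux _ _ _ hr]
        calc (i + 1) * N ≤ r * N := Nat.mul_le_mul_right N hi
        _ = N * r := Nat.mul_comm r N
      omega
    refine ⟨⟨hv1, hvN⟩, ?_⟩
    have h1 : i ≤ v * r / N := (Nat.le_div_iff_mul_le hN).mpr hfi
    have h2 : v * r / N < i + 1 := (Nat.div_lt_iff_lt_mul hN).mpr hlt
    omega

/-- Lemma 2 (ii): for positive integers `r` and `b` with `r ≤ 2^b`, the map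
`v ↦ ⌊v·r/2^b⌋` restricted to `{1, ..., 2^b - 1}` is a most uniform map into `[r]`:
every `i ∈ [r]` has either `⌊(2^b - 1)/r⌋` or `⌈(2^b - 1)/r⌉ = (2^b - 1 + r - 1)/r`
preimages. -/
theorem stmt3 (r b : ℕ) (hr : 0 < r) (hb : 0 < b) (hrb : r ≤ 2 ^ b) :
    ∀ i < r,
      ((Finset.Ioo 0 (2 ^ b)).filter fun v => v * r / 2 ^ b = i).card
        = (2 ^ b - 1) / r ∨
      ((Finset.Ioo 0 (2 ^ b)).filter fun v => v * r / 2 ^ b = i).card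
        = (2 ^ b - 1 + r - 1) / r := by
  intro i hi
  have hN2 : 2 ≤ 2 ^ b := by
    calc 2 = 2 ^ 1 := rfl
    _ ≤ 2 ^ b := Nat.pow_le_pow_right (by norm_num) hb
  obtain ⟨q, s, hsr, hqs⟩ : ∃ q s, s < r ∧ 2 ^ b = r * q + s :=
    ⟨2 ^ b / r, 2 ^ b % r, Nat.mod_lt _ hr, (Nat.div_add_mod (2 ^ b) r).symm⟩
  have hq1 : 1 ≤ q := Nat.one_le_iff_ne_zero.mpr (by rintro rfl; omega)
  have hcomm : r * q = q * r := Nat.mul_comm r q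
  have hN2' : 2 ≤ r * q + s := hqs ▸ hN2
  rw [hqs, fiber_eq_aux r (r * q + s) i hr (by omega) hi, Nat.card_Ico,
    fval_aux r q s i hr, fval_aux r q s (i + 1) hr]
  rcases Nat.eq_zero_or_pos i with hi0 | hipos
  · -- i = 0
    subst hi0
    left
    have hmax : max 1 (0 * q + (0 * s + r - 1) / r) = 1 := by
      rw [Nat.zero_mul, Nat.zero_mul, Nat.zero_add, Nat.zero_add,
        Nat.div_eq_of_lt (by omega)]
      simp
    rw [hmax, Nat.one_mul, Nat.one_mul]
    rcases Nat.eq_zero_or_pos s with hs0 | hspos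
    · subst hs0
      have hg1 : (0 + r - 1) / r = 0 := Nat.div_eq_of_lt (by omega)
      have hL : (r * q + 0 - 1) / r = q - 1 := by
        have h1 : r * q + 0 - 1 = (r - 1) + (q - 1) * r := by
          have h2 : (q - 1) * r + r = q * r := by
            have h3 : q - 1 + 1 = q := by omega
            calc (q - 1) * r + r = (q - 1 + 1) * r := by ring
            _ = q * r := by rw [h3]
          omega
        rw [h1, addmul_div_aux r _ _ hr (by omega)]
      rw [hg1, hL]
      omega
    · have hg1 : (s + r - 1) / r = 1 := div1_aux r _ hr (by omega) (by omega)
      have hL : (r * q + s - 1) / r = q := by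
        have h1 : r * q + s - 1 = (s - 1) + q * r := by omega
        rw [h1, addmul_div_aux r _ _ hr (by omega)]
      rw [hg1, hL]
      omega
  · -- i ≥ 1
    have hiq : 1 ≤ i * q := Nat.one_le_iff_ne_zero.mpr (by
      intro h
      rcases Nat.mul_eq_zero.mp h with h | h <;> omega)
    have hmax : max 1 (i * q + (i * s + r - 1) / r) = i * q + (i * s + r - 1) / r :=
      max_eq_right (hiq.trans (Nat.le_add_right _ _))
    rw [hmax]
    have hgmono : (i * s + r - 1) / r ≤ ((i + 1) * s + r - 1) / r := by
      apply Nat.div_le_div_right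
      have : i * s ≤ (i + 1) * s := Nat.mul_le_mul_right s (by omega)
      omega
    have hgstep : ((i + 1) * s + r - 1) / r ≤ (i * s + r - 1) / r + 1 := by
      have h1 : (i + 1) * s = i * s + s := by ring
      calc ((i + 1) * s + r - 1) / r ≤ ((i * s + r - 1) + r) / r :=
        Nat.div_le_div_right (by omega)
      _ = (i * s + r - 1) / r + 1 := Nat.add_div_right _ hr
    have hiq1 : (i + 1) * q = i * q + q := by ring
    rcases Nat.eq_zero_or_pos s with hs0 | hspos
    · -- s = 0 : count = q = right target (here r ≥ 2)
      subst hs0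
      right
      have hr2 : 2 ≤ r := by omega
      have hg : ∀ k : ℕ, (k * 0 + r - 1) / r = 0 := fun k => by
        rw [Nat.mul_zero, Nat.zero_add]; exact Nat.div_eq_of_lt (by omega)
      rw [hg i, hg (i + 1)]
      have hR : (r * q + 0 - 1 + r - 1) / r = q := by
        have h1 : r * q + 0 - 1 + r - 1 = (r - 2) + q * r := by omega
        rw [h1, addmul_div_aux r _ _ hr (by omega)]
      rw [hR]
      omega
    · rcases eq_or_lt_of_le (show 1 ≤ s by omega) with hs1 | hs2
      · -- s = 1 : count = q = left target
        left
        have hgi : (i * s + r - 1) / r = 1 := by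
          rw [← hs1, Nat.mul_one]; exact div1_aux r _ hr (by omega) (by omega)
        have hgi1 : ((i + 1) * s + r - 1) / r = 1 := by
          rw [← hs1, Nat.mul_one]; exact div1_aux r _ hr (by omega) (by omega)
        have hL : (r * q + s - 1) / r = q := by
          have h1 : r * q + s - 1 = (s - 1) + q * r := by omega
          rw [h1, addmul_div_aux r _ _ hr (by omega)]
        rw [hgi, hgi1, hL]
        omega
      · -- s ≥ 2
        have hL : (r * q + s - 1) / r = q := by
          have h1 : r * q + s - 1 = (s - 1) + q * r := by omega
          rw [h1, addmul_div_aux r _ _ hr (by omega)]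
        have hR : (r * q + s - 1 + r - 1) / r = q + 1 := by
          have h2 : (q + 1) * r = q * r + r := by ring
          have h1 : r * q + s - 1 + r - 1 = (s - 2) + (q + 1) * r := by omega
          rw [h1, addmul_div_aux r _ _ hr (by omega)]
        rcases Nat.eq_zero_or_pos (((i + 1) * s + r - 1) / r - (i * s + r - 1) / r)
          with hd | hd
        · left; rw [hL]; omega
        · right; rw [hR]; omega
end

section
/- Let r and b be positive integers with r ≤ 2^b. The map v ↦ ⌊(v+1)·r/2^b⌋ from [2^b − 1] to [r] is most uniform: for every i ∈ [r], the number of v ∈ [2^b − 1] with ⌊(v+1)·r/2^b⌋ = i is either ⌊(2^b − 1)/r⌋ or ⌈(2^b − 1)/r⌉. -/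
lemma myceil_le_iff {r : ℕ} (hr : 0 < r) (a w : ℕ) : (a + r - 1) / r ≤ w ↔ a ≤ w * r := by
  constructor
  · intro h
    have hd := Nat.div_add_mod (a + r - 1) r
    have hm := Nat.mod_lt (a + r - 1) hr
    have h2 : r * ((a + r - 1)/r) ≤ r * w := Nat.mul_le_mul_left r h
    have : w * r = r * w := mul_comm _ _
    omega
  · intro h
    have h1 : (a + r - 1) / r ≤ (w * r + r - 1) / r := Nat.div_le_div_right (by omega)
    have h2 : (w * r + r - 1) / r = w := by
      have : w * r + r - 1 = r * w + (r - 1) := by have := mul_comm w r; omega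
      rw [this, Nat.mul_add_div hr, Nat.div_eq_of_lt (by omega : r - 1 < r)]
      omega
    omega

lemma mydiv_helper {r : ℕ} (hr : 0 < r) (a c : ℕ) (h : c < r) : (r * a + c) / r = a := by
  rw [Nat.mul_add_div hr, Nat.div_eq_of_lt h]; omega

lemma mysuperadd {r : ℕ} (hr : 0 < r) (x y : ℕ) : x / r + y / r ≤ (x + y) / r := by
  rw [Nat.le_div_iff_mul_le hr, add_mul]
  exact Nat.add_le_add (Nat.div_mul_le_self x r) (Nat.div_mul_le_self y r)

lemma mysubadd {r : ℕ} (hr : 0 < r) (x y : ℕ) :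
    (x + y + r - 1) / r ≤ (x + r - 1) / r + (y + r - 1) / r := by
  rw [Nat.div_le_iff_le_mul_add_pred hr]
  have hx : x ≤ r * ((x + r - 1) / r) := by
    have := (myceil_le_iff hr x ((x + r - 1)/r)).2
    have hd := Nat.div_add_mod (x + r - 1) r
    have hm := Nat.mod_lt (x + r - 1) hr
    omega
  have hy : y ≤ r * ((y + r - 1) / r) := by
    have hd := Nat.div_add_mod (y + r - 1) r
    have hm := Nat.mod_lt (y + r - 1) hr
    omega
  have : r * ((x + r - 1) / r + (y + r - 1) / r)
      = r * ((x + r - 1) / r) + r * ((y + r - 1) / r) := by ring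
  omega

/-- Lemma 2 (iii): for positive integers `r` and `b` with `r ≤ 2^b`, the map
`v ↦ ⌊(v+1)·r/2^b⌋` is a most uniform map from `[2^b - 1]` to `[r]`: every `i ∈ [r]`
has either `⌊(2^b - 1)/r⌋` or `⌈(2^b - 1)/r⌉ = (2^b - 1 + r - 1)/r` preimages. -/
theorem stmt4 (r b : ℕ) (hr : 0 < r) (hb : 0 < b) (hrb : r ≤ 2 ^ b) :
    ∀ i < r,
      ((Finset.range (2 ^ b - 1)).filter fun v => (v + 1) * r / 2 ^ b = i).card
        = (2 ^ b - 1) / r ∨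
      ((Finset.range (2 ^ b - 1)).filter fun v => (v + 1) * r / 2 ^ b = i).card
        = (2 ^ b - 1 + r - 1) / r := by
  intro i hi
  set N := 2 ^ b with hNdef
  have hN2 : 2 ≤ N := by
    calc 2 = 2 ^ 1 := by norm_num
    _ ≤ 2 ^ b := Nat.pow_le_pow_right (by norm_num) hb
  clear_value N
  obtain ⟨L, hLdef⟩ : ∃ L : ℕ → ℕ, ∀ k, L k = (k * N + r - 1) / r := ⟨_, fun _ => rfl⟩
  -- ceil characterization
  have hceil : ∀ k w : ℕ, L k ≤ w ↔ k * N ≤ w * r := fun k w => by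
    rw [hLdef k]; exact myceil_le_iff hr (k * N) w
  -- membership characterization
  have hmem : ∀ v : ℕ, ((v + 1) * r / N = i ↔ (L i ≤ v + 1 ∧ v + 1 < L (i + 1))) := by
    intro v
    have h1 := hceil i (v + 1)
    have h2 := hceil (i + 1) (v + 1)
    have hN0 : 0 < N := by omega
    have h3 : (v + 1) * r / N = i ↔ i * N ≤ (v + 1) * r ∧ (v + 1) * r < (i + 1) * N := by
      rw [show ((v + 1) * r / N = i) ↔ (i ≤ (v + 1) * r / N ∧ (v + 1) * r / N < i + 1) from
        by omega, Nat.le_div_iff_mul_le hN0, Nat.div_lt_iff_lt_mul hN0]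
    omega
  have hLtop : L (i + 1) ≤ N := by
    simp only [hLdef]
    have : ((i + 1) * N + r - 1) / r ≤ (r * N + r - 1) / r :=
      Nat.div_le_div_right (by
        have : (i + 1) * N ≤ r * N := Nat.mul_le_mul_right N (by omega)
        omega)
    have h2 : (r * N + r - 1) / r = N := by
      have : r * N + r - 1 = r * N + (r - 1) := by omega
      rw [this, mydiv_helper hr N (r-1) (by omega)]
    omega
  have hfilter : ((Finset.range (N - 1)).filter fun v => (v + 1) * r / N = i)
      = Finset.Ico (max (L i) 1 - 1) (L (i + 1) - 1) := by
    ext v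
    simp only [Finset.mem_filter, Finset.mem_range, Finset.mem_Ico]
    have := hmem v
    omega
  rw [hfilter, Nat.card_Ico]
  -- decomposition
  have hqs := Nat.div_add_mod N r
  set q := N / r with hq
  set s := N % r with hs
  have hsr : s < r := Nat.mod_lt N hr
  clear_value q s
  rcases Nat.eq_zero_or_pos i with hi0 | hi1
  · -- i = 0
    subst hi0
    have hL0 : L 0 = 0 := by
      simp only [hLdef]; simp only [Nat.zero_mul, Nat.zero_add]; exact Nat.div_eq_of_lt (by omega)
    have hL1 : L (0 + 1) = (N - 1) / r + 1 := by
      simp only [hLdef]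
      have : (0 + 1) * N + r - 1 = (N - 1) + r := by omega
      rw [this, Nat.add_div_right _ hr]
    left
    rw [hL0, hL1]
    norm_num
  · -- i ≥ 1, hence r ≥ 2
    have hr2 : 2 ≤ r := by omega
    have hLi1 : 1 ≤ L i := by
      simp only [hLdef]
      have : 1 * r ≤ i * N + r - 1 := by
        have : N ≤ i * N := Nat.le_mul_of_pos_left N hi1
        omega
      exact (Nat.le_div_iff_mul_le hr).2 this
    rw [max_eq_left hLi1]
    rcases eq_or_ne s 1 with hs1 | hs1
    · -- s = 1 : exact computation
      left
      have hval : ∀ k : ℕ, 1 ≤ k → k ≤ r → L k = k * q + 1 := by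
        intro k hk1 hkr
        simp only [hLdef]
        have hkN : k * N = r * (k * q) + k := by
          have : N = r * q + 1 := by omega
          rw [this]; ring
        have harg : k * N + r - 1 = r * (k * q + 1) + (k - 1) := by
          have : r * (k * q + 1) = r * (k * q) + r := by ring
          omega
        rw [harg, mydiv_helper hr _ _ (by omega)]
      have hvi := hval i hi1 (by omega)
      have hvi1 := hval (i + 1) (by omega) (by omega)
      have hfloor : (N - 1) / r = q := by
        have : N - 1 = r * q + 0 := by omega
        rw [this, mydiv_helper hr q 0 hr]
      have he : (i + 1) * q = i * q + q := by ring
      rw [hvi, hvi1, hfloor, he]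
      omega
    · -- s ≠ 1 : bounds
      have hlow : L i + (N - 1) / r ≤ L (i + 1) := by
        simp only [hLdef]
        calc (i * N + r - 1) / r + (N - 1) / r ≤ (i * N + r - 1 + (N - 1)) / r :=
              mysuperadd hr _ _
        _ ≤ ((i + 1) * N + r - 1) / r := Nat.div_le_div_right (by
              have : (i + 1) * N = i * N + N := by ring
              omega)
      have hupp : L (i + 1) ≤ L i + (N + r - 1) / r := by
        simp only [hLdef]
        have harg : (i + 1) * N + r - 1 = i * N + N + r - 1 := by
          have : (i + 1) * N = i * N + N := by ring
          omega
        rw [harg]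
        exact mysubadd hr (i * N) N
      have hceilN : (N + r - 1) / r = (N + r - 2) / r := by
        rcases Nat.eq_zero_or_pos s with hs0 | hs2
        · have h1 : N + r - 1 = r * q + (r - 1) := by omega
          have h2 : N + r - 2 = r * q + (r - 2) := by omega
          rw [h1, h2, mydiv_helper hr q _ (by omega), mydiv_helper hr q _ (by omega)]
        · have hs2' : 2 ≤ s := by omega
          have h1 : N + r - 1 = r * (q + 1) + (s - 1) := by
            have : r * (q + 1) = r * q + r := by ring
            omega
          have h2 : N + r - 2 = r * (q + 1) + (s - 2) := by
            have : r * (q + 1) = r * q + r := by ring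
            omega
          rw [h1, h2, mydiv_helper hr _ _ (by omega), mydiv_helper hr _ _ (by omega)]
      have hfc : (N + r - 2) / r ≤ (N - 1) / r + 1 := by
        have h1 : (N + r - 2) / r ≤ (N - 1 + r) / r := Nat.div_le_div_right (by omega)
        rw [Nat.add_div_right _ hr] at h1
        exact h1
      have hupp2 : L (i + 1) ≤ L i + (N + r - 2) / r := by rw [← hceilN]; exact hupp
      have hgoal : N - 1 + r - 1 = N + r - 2 := by omega
      rw [hgoal]
      generalize hG : (N + r - 2) / r = G at hupp2 hfc ⊢
      generalize hF : (N - 1) / r = F at hlow hfc ⊢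
      omega
end

section
/- Let i : [u] → [r] and s : [u] → {−1,1} be random functions on a probability space satisfying: (Sign Cancellation for k = 4) for every j ≤ 4, every j distinct keys x₀,...,x_{j−1} ∈ [u], and every real-valued function A of (i(x₀),...,i(x_{j−1}), s(x₁),...,s(x_{j−1})), E[s(x₀)·A] = 0; and ((1+ε)/r-low collision probability) for all distinct x ≠ y, Pr[i(x) = i(y)] ≤ (1+ε)/r. Then for any values f : [u] → ℤ, the Count Sketch estimator X satisfies E[X] = F₂ and Var[X] ≤ 2(1+ε)(F₂² − F₄)/r ≤ 2(1+ε)F₂²/r, where F₂ = Σ_x f(x)² and F₄ = Σ_x f(x)⁴. -/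
open MeasureTheory ProbabilityTheory


lemma cs_inj2 {u : ℕ} (a b : Fin u) (hab : a ≠ b) :
    Function.Injective (![a,b] : Fin 2 → Fin u) := by
  intro m n hmn; fin_cases m <;> fin_cases n <;> simp_all

lemma cs_inj3 {u : ℕ} (a b c : Fin u) (hab : a ≠ b) (hac : a ≠ c) (hbc : b ≠ c) :
    Function.Injective (![a,b,c] : Fin 3 → Fin u) := by
  intro m n hmn; fin_cases m <;> fin_cases n <;> simp_all

lemma cs_inj4 {u : ℕ} (a b c d : Fin u) (hab : a ≠ b) (hac : a ≠ c) (had : a ≠ d)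
    (hbc : b ≠ c) (hbd : b ≠ d) (hcd : c ≠ d) :
    Function.Injective (![a,b,c,d] : Fin 4 → Fin u) := by
  intro m n hmn; fin_cases m <;> fin_cases n <;> simp_all

section aux
variable {Ω : Type*} [MeasureSpace Ω]
variable {u r : ℕ} (i : Ω → Fin u → Fin r) (s : Ω → Fin u → ℝ)

lemma cs_gen2
    (hcancel : ∀ j : ℕ, j ≤ 4 → ∀ hj0 : 0 < j,
      ∀ x : Fin j → Fin u, Function.Injective x →
      ∀ A : (Fin j → Fin r) → (Fin j → ℝ) → ℝ,
      (∀ (iv : Fin j → Fin r) (sv sv' : Fin j → ℝ),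
        (∀ m : Fin j, m ≠ ⟨0, hj0⟩ → sv m = sv' m) → A iv sv = A iv sv') →
      ∫ ω, s ω (x ⟨0, hj0⟩) * A (fun m => i ω (x m)) (fun m => s ω (x m)) = 0)
    (a b : Fin u) (hab : a ≠ b) (G : Fin r → Fin r → ℝ) :
    ∫ ω, s ω a * (s ω b * G (i ω a) (i ω b)) = 0 := by
  have h := hcancel 2 (by norm_num) (Nat.succ_pos 1) ![a,b] (cs_inj2 a b hab)
    (fun iv sv => sv 1 * G (iv 0) (iv 1))
    (fun iv sv sv' h => by rw [h 1 (by decide)])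
  exact h

lemma cs_gen3
    (hcancel : ∀ j : ℕ, j ≤ 4 → ∀ hj0 : 0 < j,
      ∀ x : Fin j → Fin u, Function.Injective x →
      ∀ A : (Fin j → Fin r) → (Fin j → ℝ) → ℝ,
      (∀ (iv : Fin j → Fin r) (sv sv' : Fin j → ℝ),
        (∀ m : Fin j, m ≠ ⟨0, hj0⟩ → sv m = sv' m) → A iv sv = A iv sv') →
      ∫ ω, s ω (x ⟨0, hj0⟩) * A (fun m => i ω (x m)) (fun m => s ω (x m)) = 0)
    (a b c : Fin u) (hab : a ≠ b) (hac : a ≠ c) (hbc : b ≠ c)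
    (G : Fin r → Fin r → Fin r → ℝ) :
    ∫ ω, s ω a * (s ω c * G (i ω a) (i ω b) (i ω c)) = 0 := by
  have h := hcancel 3 (by norm_num) (Nat.succ_pos 2) ![a,b,c] (cs_inj3 a b c hab hac hbc)
    (fun iv sv => sv 2 * G (iv 0) (iv 1) (iv 2))
    (fun iv sv sv' h => by rw [h 2 (by decide)])
  exact h

lemma cs_gen4
    (hcancel : ∀ j : ℕ, j ≤ 4 → ∀ hj0 : 0 < j,
      ∀ x : Fin j → Fin u, Function.Injective x →
      ∀ A : (Fin j → Fin r) → (Fin j → ℝ) → ℝ,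
      (∀ (iv : Fin j → Fin r) (sv sv' : Fin j → ℝ),
        (∀ m : Fin j, m ≠ ⟨0, hj0⟩ → sv m = sv' m) → A iv sv = A iv sv') →
      ∫ ω, s ω (x ⟨0, hj0⟩) * A (fun m => i ω (x m)) (fun m => s ω (x m)) = 0)
    (a b c d : Fin u) (hab : a ≠ b) (hac : a ≠ c) (had : a ≠ d)
    (hbc : b ≠ c) (hbd : b ≠ d) (hcd : c ≠ d)
    (G : Fin r → Fin r → Fin r → Fin r → ℝ) :
    ∫ ω, s ω a * (s ω b * (s ω c * (s ω d * G (i ω a) (i ω b) (i ω c) (i ω d)))) = 0 := by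
  have h := hcancel 4 (by norm_num) (Nat.succ_pos 3) ![a,b,c,d]
    (cs_inj4 a b c d hab hac had hbc hbd hcd)
    (fun iv sv => sv 1 * (sv 2 * (sv 3 * G (iv 0) (iv 1) (iv 2) (iv 3))))
    (fun iv sv sv' h => by rw [h 1 (by decide), h 2 (by decide), h 3 (by decide)])
  exact h

end aux

/-- Lemma 3 (Count Sketch in the classical case): if the random functions
`i : [u] → [r]` and `s : [u] → {-1,1}` have Sign Cancellation for `k = 4` and
`(1+ε)/r`-low collision probability, then the Count Sketch estimator `X` satisfies
`E[X] = F₂` and `Var[X] ≤ 2(1+ε)(F₂² - F₄)/r ≤ 2(1+ε)F₂²/r`. -/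
theorem stmt5
    {Ω : Type*} [MeasureSpace Ω] [IsProbabilityMeasure (ℙ : Measure Ω)]
    (u r : ℕ) (ε : ℝ) (hε : 0 ≤ ε)
    (i : Ω → Fin u → Fin r)
    (s : Ω → Fin u → ℝ)
    (himeas : ∀ x : Fin u, Measurable fun ω => i ω x)
    (hsmeas : ∀ x : Fin u, Measurable fun ω => s ω x)
    (hsval : ∀ ω x, s ω x = 1 ∨ s ω x = -1)
    (hcancel : ∀ j : ℕ, j ≤ 4 → ∀ hj0 : 0 < j,
      ∀ x : Fin j → Fin u, Function.Injective x →
      ∀ A : (Fin j → Fin r) → (Fin j → ℝ) → ℝ,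
      (∀ (iv : Fin j → Fin r) (sv sv' : Fin j → ℝ),
        (∀ m : Fin j, m ≠ ⟨0, hj0⟩ → sv m = sv' m) → A iv sv = A iv sv') →
      ∫ ω, s ω (x ⟨0, hj0⟩) * A (fun m => i ω (x m)) (fun m => s ω (x m)) = 0)
    (hcoll : ∀ x y : Fin u, x ≠ y →
      (ℙ {ω | i ω x = i ω y}).toReal ≤ (1 + ε) / r)
    (f : Fin u → ℤ)
    (X : Ω → ℝ)
    (hX : ∀ ω, X ω = ∑ j : Fin r,
      (∑ x : Fin u, s ω x * (f x : ℝ) * (if i ω x = j then 1 else 0)) ^ 2)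
    (F₂ F₄ : ℝ) (hF₂ : F₂ = ∑ x : Fin u, (f x : ℝ) ^ 2)
    (hF₄ : F₄ = ∑ x : Fin u, (f x : ℝ) ^ 4) :
    (∫ ω, X ω) = F₂ ∧
    variance X ℙ ≤ 2 * (1 + ε) * (F₂ ^ 2 - F₄) / r ∧
    2 * (1 + ε) * (F₂ ^ 2 - F₄) / r ≤ 2 * (1 + ε) * F₂ ^ 2 / r := by
  classical
  set T : Fin u → Fin u → Ω → ℝ := fun x y ω =>
    s ω x * s ω y * ((f x : ℝ) * (f y : ℝ)) * (if i ω x = i ω y then 1 else 0) with hTdef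
  set D : Fin u → Fin u → Ω → ℝ := fun x y ω => if x = y then 0 else T x y ω with hDdef
  set Y : Ω → ℝ := fun ω => ∑ x : Fin u, ∑ y : Fin u, D x y ω with hYdef
  have hms : ∀ x y : Fin u, MeasurableSet {ω | i ω x = i ω y} := fun x y =>
    measurableSet_eq_fun (himeas x) (himeas y)
  have hTmeas : ∀ x y, Measurable (T x y) := by
    intro x y
    exact ((((hsmeas x).mul (hsmeas y)).mul measurable_const).mul
      (Measurable.ite (hms x y) measurable_const measurable_const))
  have hDmeas : ∀ x y, Measurable (D x y) := by
    intro x y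
    by_cases h : x = y
    · simp only [hDdef, if_pos h]; exact measurable_const
    · simp only [hDdef, if_neg h]; exact hTmeas x y
  have hTbd : ∀ x y ω, |T x y ω| ≤ |(f x : ℝ) * (f y : ℝ)| := by
    intro x y ω
    simp only [hTdef]
    rcases hsval ω x with h|h <;> rcases hsval ω y with h'|h' <;>
      by_cases hi : i ω x = i ω y <;>
      simp [h, h', hi, abs_mul] <;> positivity
  have hDbd : ∀ x y ω, |D x y ω| ≤ |(f x : ℝ) * (f y : ℝ)| := by
    intro x y ω
    by_cases h : x = y
    · simp only [hDdef, if_pos h]; simp; positivity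
    · simp only [hDdef, if_neg h]; exact hTbd x y ω
  have hInt : ∀ (g : Ω → ℝ) (C : ℝ), Measurable g → (∀ ω, |g ω| ≤ C) → Integrable g := by
    intro g C hm hb
    exact ⟨hm.aestronglyMeasurable,
      HasFiniteIntegral.of_bounded (C := C) (ae_of_all _ fun ω => by
        simpa [Real.norm_eq_abs] using hb ω)⟩
  have hDint : ∀ x y, Integrable (D x y) := fun x y =>
    hInt _ _ (hDmeas x y) (hDbd x y)
  have hDDint : ∀ x y z w, Integrable (fun ω => D x y ω * D z w ω) := by
    intro x y z w
    refine hInt _ (|(f x : ℝ) * f y| * |(f z : ℝ) * f w|) ((hDmeas x y).mul (hDmeas z w)) ?_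
    intro ω
    rw [abs_mul]
    exact mul_le_mul (hDbd x y ω) (hDbd z w ω) (abs_nonneg _) (abs_nonneg _)
  -- expansion of X
  have hXF : ∀ ω, X ω = F₂ + Y ω := by
    intro ω
    have key : (∑ j : Fin r, (∑ x : Fin u,
        s ω x * (f x : ℝ) * (if i ω x = j then 1 else 0)) ^ 2)
        = ∑ x : Fin u, ∑ y : Fin u, T x y ω := by
      simp only [sq, Finset.sum_mul_sum]
      rw [Finset.sum_comm]
      refine Finset.sum_congr rfl fun x _ => ?_
      rw [Finset.sum_comm]
      refine Finset.sum_congr rfl fun y _ => ?_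
      simp only [mul_ite, ite_mul, mul_one, mul_zero, one_mul, zero_mul]
      rw [Finset.sum_ite_eq]
      simp only [Finset.mem_univ, if_true]
      simp only [hTdef]
      by_cases h : i ω x = i ω y
      · rw [if_pos h, if_pos h]; ring
      · rw [if_neg h, if_neg h]; ring
    have split : ∀ x y : Fin u, T x y ω
        = (if x = y then (f x : ℝ) ^ 2 else 0) + D x y ω := by
      intro x y
      by_cases h : x = y
      · subst h
        simp only [hDdef, if_pos rfl, add_zero, hTdef]
        rcases hsval ω x with hs|hs <;> rw [hs] <;> simp <;> ring
      · simp [hDdef, hTdef, h]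
    rw [hX ω, key]
    simp only [split, Finset.sum_add_distrib]
    congr 1
    rw [hF₂]
    refine Finset.sum_congr rfl fun x _ => ?_
    rw [Finset.sum_ite_eq]
    simp
  -- expectation of D is zero
  have hDzero : ∀ x y : Fin u, ∫ ω, D x y ω = 0 := by
    intro x y
    by_cases hxy : x = y
    · simp [hDdef, hxy]
    · have hgen := cs_gen2 i s hcancel x y hxy
        (fun i1 i2 => ((f x : ℝ) * (f y : ℝ)) * (if i1 = i2 then 1 else 0))
      have heq : ∀ ω, D x y ω = s ω x * (s ω y *
          (((f x : ℝ) * (f y : ℝ)) * (if i ω x = i ω y then 1 else 0))) := by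
        intro ω; simp only [hDdef, if_neg hxy, hTdef]; ring
      simp only [heq]
      exact hgen
  have hYint : Integrable Y := by
    simp only [hYdef]
    exact integrable_finset_sum _ fun x _ => integrable_finset_sum _ fun y _ => hDint x y
  have hEY : ∫ ω, Y ω = 0 := by
    simp only [hYdef]
    rw [integral_finset_sum _ fun x _ => integrable_finset_sum _ fun y _ => hDint x y]
    refine Finset.sum_eq_zero fun x _ => ?_
    rw [integral_finset_sum _ fun y _ => hDint x y]
    exact Finset.sum_eq_zero fun y _ => hDzero x y
  have hEX : ∫ ω, X ω = F₂ := by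
    simp only [hXF]
    rw [integral_add (integrable_const F₂) hYint, integral_const, hEY]
    simp
  refine ⟨hEX, ?_, ?_⟩
  · -- variance bound
    have hXmeas : Measurable X := by
      have : X = fun ω => F₂ + Y ω := funext hXF
      rw [this]
      exact measurable_const.add (Finset.measurable_sum _ fun x _ =>
        Finset.measurable_sum _ fun y _ => hDmeas x y)
    set B : ℝ := ∑ x : Fin u, ∑ y : Fin u, |(f x : ℝ) * (f y : ℝ)| with hBdef
    have hYbd : ∀ ω, |Y ω| ≤ B := by
      intro ω
      simp only [hYdef, hBdef]
      calc |∑ x : Fin u, ∑ y : Fin u, D x y ω|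
          ≤ ∑ x : Fin u, |∑ y : Fin u, D x y ω| := Finset.abs_sum_le_sum_abs _ _
        _ ≤ ∑ x : Fin u, ∑ y : Fin u, |D x y ω| :=
            Finset.sum_le_sum fun x _ => Finset.abs_sum_le_sum_abs _ _
        _ ≤ ∑ x : Fin u, ∑ y : Fin u, |(f x : ℝ) * (f y : ℝ)| :=
            Finset.sum_le_sum fun x _ => Finset.sum_le_sum fun y _ => hDbd x y ω
    have hXmem : MemLp X 2 ℙ := by
      refine (memLp_top_of_bound hXmeas.aestronglyMeasurable (|F₂| + B)
        (ae_of_all _ fun ω => ?_)).mono_exponent le_top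
      rw [hXF ω, Real.norm_eq_abs]
      exact (abs_add_le _ _).trans (add_le_add le_rfl (hYbd ω))
    have hvar : variance X ℙ = ∫ ω, Y ω * Y ω := by
      rw [variance_eq_integral hXmem.1.aemeasurable]
      change ∫ ω, ((X - fun _ => ∫ x, X x) ^ 2 : Ω → ℝ) ω = _
      have h2 : ((X - fun _ => ∫ x, X x) ^ 2 : Ω → ℝ) = fun ω => Y ω * Y ω := by
        funext ω
        simp only [Pi.pow_apply, Pi.sub_apply, hEX, hXF ω]
        ring
      rw [h2]
    have hYY : (fun ω => Y ω * Y ω) = fun ω => ∑ x : Fin u, ∑ y : Fin u,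
        ∑ z : Fin u, ∑ w : Fin u, D x y ω * D z w ω := by
      funext ω
      simp only [hYdef]
      rw [Finset.sum_mul]
      refine Finset.sum_congr rfl fun x _ => ?_
      rw [Finset.sum_mul]
      refine Finset.sum_congr rfl fun y _ => ?_
      rw [Finset.mul_sum]
      refine Finset.sum_congr rfl fun z _ => ?_
      rw [Finset.mul_sum]
    set V : Fin u → Fin u → ℝ := fun x y =>
      (f x : ℝ) ^ 2 * (f y : ℝ) ^ 2 * (ℙ {ω | i ω x = i ω y}).toReal with hVdef
    have hind : ∀ x y : Fin u, ∫ ω, (if i ω x = i ω y then (1:ℝ) else 0)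
        = (ℙ {ω | i ω x = i ω y}).toReal := by
      intro x y
      have hfun : (fun ω => if i ω x = i ω y then (1:ℝ) else 0)
          = Set.indicator {ω | i ω x = i ω y} (fun _ => (1:ℝ)) := by
        funext ω
        by_cases h : i ω x = i ω y <;> simp [Set.indicator_apply, h]
      rw [hfun, integral_indicator_const (1:ℝ) (hms x y)]
      simp
      rfl
    have hpair1 : ∀ x y : Fin u, ∫ ω, T x y ω * T x y ω = V x y := by
      intro x y
      have heq : ∀ ω, T x y ω * T x y ω
          = (f x : ℝ) ^ 2 * (f y : ℝ) ^ 2 * (if i ω x = i ω y then 1 else 0) := by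
        intro ω
        simp only [hTdef]
        by_cases hi : i ω x = i ω y
        · rw [if_pos hi]
          rcases hsval ω x with h|h <;> rcases hsval ω y with h'|h' <;> rw [h, h'] <;> ring
        · rw [if_neg hi]
          ring
      simp only [heq]
      rw [integral_const_mul, hind x y, hVdef]
    have hpair2 : ∀ x y : Fin u, ∫ ω, T x y ω * T y x ω = V x y := by
      intro x y
      have heq : ∀ ω, T x y ω * T y x ω
          = (f x : ℝ) ^ 2 * (f y : ℝ) ^ 2 * (if i ω x = i ω y then 1 else 0) := by
        intro ω
        simp only [hTdef]
        by_cases hi : i ω x = i ω y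
        · rw [if_pos hi, if_pos hi.symm]
          rcases hsval ω x with h|h <;> rcases hsval ω y with h'|h' <;> rw [h, h'] <;> ring
        · rw [if_neg hi, if_neg (fun hh => hi hh.symm)]
          ring
      simp only [heq]
      rw [integral_const_mul, hind x y, hVdef]
    have hcross : ∀ x y z w : Fin u, x ≠ y → z ≠ w → ¬(z = x ∧ w = y) → ¬(z = y ∧ w = x) →
        ∫ ω, T x y ω * T z w ω = 0 := by
      intro x y z w hxy hzw h1 h2
      by_cases hzx : z = x
      · subst hzx
        have hwy : w ≠ y := fun h => h1 ⟨rfl, h⟩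
        have hgen := cs_gen3 i s hcancel y z w (Ne.symm hxy) (Ne.symm hwy) hzw
          (fun i1 i2 i3 => ((f z : ℝ) * f y) * ((f z : ℝ) * f w) *
            ((if i2 = i1 then (1:ℝ) else 0) * (if i2 = i3 then 1 else 0)))
        have heq : ∀ ω, T z y ω * T z w ω = s ω y * (s ω w *
            (((f z : ℝ) * f y) * ((f z : ℝ) * f w) *
              ((if i ω z = i ω y then (1:ℝ) else 0) * (if i ω z = i ω w then 1 else 0)))) := by
          intro ω
          simp only [hTdef]
          rcases hsval ω z with h|h <;> rw [h] <;> ring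
        simp only [heq]
        exact hgen
      · by_cases hwx : w = x
        · subst hwx
          have hzy : z ≠ y := fun h => h2 ⟨h, rfl⟩
          have hgen := cs_gen3 i s hcancel y w z (Ne.symm hxy) (Ne.symm hzy) (Ne.symm hzw)
            (fun i1 i2 i3 => ((f w : ℝ) * f y) * ((f z : ℝ) * f w) *
              ((if i2 = i1 then (1:ℝ) else 0) * (if i3 = i2 then 1 else 0)))
          have heq : ∀ ω, T w y ω * T z w ω = s ω y * (s ω z *
              (((f w : ℝ) * f y) * ((f z : ℝ) * f w) *
                ((if i ω w = i ω y then (1:ℝ) else 0) * (if i ω z = i ω w then 1 else 0)))) := by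
            intro ω
            simp only [hTdef]
            rcases hsval ω w with h|h <;> rw [h] <;> ring
          simp only [heq]
          exact hgen
        · by_cases hzy : z = y
          · subst hzy
            have hgen := cs_gen3 i s hcancel x z w hxy (Ne.symm hwx) hzw
              (fun i1 i2 i3 => ((f x : ℝ) * f z) * ((f z : ℝ) * f w) *
                ((if i1 = i2 then (1:ℝ) else 0) * (if i2 = i3 then 1 else 0)))
            have heq : ∀ ω, T x z ω * T z w ω = s ω x * (s ω w *
                (((f x : ℝ) * f z) * ((f z : ℝ) * f w) *
                  ((if i ω x = i ω z then (1:ℝ) else 0) * (if i ω z = i ω w then 1 else 0)))) := by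
              intro ω
              simp only [hTdef]
              rcases hsval ω z with h|h <;> rw [h] <;> ring
            simp only [heq]
            exact hgen
          · by_cases hwy : w = y
            · subst hwy
              have hgen := cs_gen3 i s hcancel x w z hxy (Ne.symm hzx) (Ne.symm hzw)
                (fun i1 i2 i3 => ((f x : ℝ) * f w) * ((f z : ℝ) * f w) *
                  ((if i1 = i2 then (1:ℝ) else 0) * (if i3 = i2 then 1 else 0)))
              have heq : ∀ ω, T x w ω * T z w ω = s ω x * (s ω z *
                  (((f x : ℝ) * f w) * ((f z : ℝ) * f w) *
                    ((if i ω x = i ω w then (1:ℝ) else 0) * (if i ω z = i ω w then 1 else 0)))) := by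
                intro ω
                simp only [hTdef]
                rcases hsval ω w with h|h <;> rw [h] <;> ring
              simp only [heq]
              exact hgen
            · have hgen := cs_gen4 i s hcancel x y z w hxy (Ne.symm hzx) (Ne.symm hwx)
                (Ne.symm hzy) (Ne.symm hwy) hzw
                (fun i1 i2 i3 i4 => ((f x : ℝ) * f y) * ((f z : ℝ) * f w) *
                  ((if i1 = i2 then (1:ℝ) else 0) * (if i3 = i4 then 1 else 0)))
              have heq : ∀ ω, T x y ω * T z w ω = s ω x * (s ω y * (s ω z * (s ω w *
                  (((f x : ℝ) * f y) * ((f z : ℝ) * f w) *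
                    ((if i ω x = i ω y then (1:ℝ) else 0) *
                      (if i ω z = i ω w then 1 else 0)))))) := by
                intro ω
                simp only [hTdef]
                ring
              simp only [heq]
              exact hgen
    have hval : ∀ x y z w : Fin u, (∫ ω, D x y ω * D z w ω)
        = (if x ≠ y ∧ w = y ∧ z = x then V x y else 0)
          + (if x ≠ y ∧ w = x ∧ z = y then V x y else 0) := by
      intro x y z w
      by_cases hxy : x = y
      · simp [hDdef, hxy]
      · by_cases hzw : z = w
        · have hr1 : ¬(x ≠ y ∧ w = y ∧ z = x) := by
            rintro ⟨h, h1, h2⟩; exact h (h2.symm.trans (hzw.trans h1))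
          have hr2 : ¬(x ≠ y ∧ w = x ∧ z = y) := by
            rintro ⟨h, h1, h2⟩; exact h (h1.symm.trans (hzw.symm.trans h2))
          have hz : ∀ ω, D x y ω * D z w ω = 0 := by
            intro ω; simp [hDdef, hzw]
          simp only [hz, if_neg hr1, if_neg hr2, integral_zero, add_zero]
        · have hDT : ∀ ω, D x y ω * D z w ω = T x y ω * T z w ω := by
            intro ω; simp [hDdef, hxy, hzw]
          simp only [hDT]
          by_cases hc1 : z = x ∧ w = y
          · obtain ⟨hz, hw⟩ := hc1
            have hn2 : ¬(x ≠ y ∧ w = x ∧ z = y) := by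
              rintro ⟨h, h1, h2⟩; exact h (hz.symm.trans h2)
            rw [if_pos ⟨hxy, hw, hz⟩, if_neg hn2, add_zero, hz, hw]
            exact hpair1 x y
          · by_cases hc2 : z = y ∧ w = x
            · obtain ⟨hz, hw⟩ := hc2
              have hn1 : ¬(x ≠ y ∧ w = y ∧ z = x) := by
                rintro ⟨h, h1, h2⟩; exact h (h2.symm.trans hz)
              rw [if_neg hn1, if_pos ⟨hxy, hw, hz⟩, zero_add, hz, hw]
              exact hpair2 x y
            · have hn1 : ¬(x ≠ y ∧ w = y ∧ z = x) := fun ⟨_, h1, h2⟩ => hc1 ⟨h2, h1⟩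
              have hn2 : ¬(x ≠ y ∧ w = x ∧ z = y) := fun ⟨_, h1, h2⟩ => hc2 ⟨h2, h1⟩
              rw [hcross x y z w hxy hzw hc1 hc2, if_neg hn1, if_neg hn2, add_zero]
    have hinner : ∀ x y : Fin u, (∑ z : Fin u, ∑ w : Fin u, ∫ ω, D x y ω * D z w ω)
        = if x = y then 0 else 2 * V x y := by
      intro x y
      by_cases hxy : x = y
      · simp only [hval, hxy]
        simp
      · simp only [hval]
        rw [if_neg hxy]
        simp only [ne_eq, hxy, not_false_eq_true, true_and, ite_and,
          Finset.sum_add_distrib, Finset.sum_ite_eq', Finset.mem_univ, if_true]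
        ring
    have hvar4 : variance X ℙ = ∑ x : Fin u, ∑ y : Fin u,
        (if x = y then (0:ℝ) else 2 * V x y) := by
      rw [hvar, hYY]
      rw [integral_finset_sum _ fun x _ => integrable_finset_sum _ fun y _ =>
        integrable_finset_sum _ fun z _ => integrable_finset_sum _ fun w _ => hDDint x y z w]
      refine Finset.sum_congr rfl fun x _ => ?_
      rw [integral_finset_sum _ fun y _ => integrable_finset_sum _ fun z _ =>
        integrable_finset_sum _ fun w _ => hDDint x y z w]
      refine Finset.sum_congr rfl fun y _ => ?_
      rw [integral_finset_sum _ fun z _ => integrable_finset_sum _ fun w _ => hDDint x y z w]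
      rw [← hinner x y]
      refine Finset.sum_congr rfl fun z _ => ?_
      rw [integral_finset_sum _ fun w _ => hDDint x y z w]
    have hbound : variance X ℙ ≤ ∑ x : Fin u, ∑ y : Fin u,
        (if x = y then (0:ℝ) else 2 * ((1 + ε) / r) * ((f x : ℝ)^2 * (f y : ℝ)^2)) := by
      rw [hvar4]
      refine Finset.sum_le_sum fun x _ => Finset.sum_le_sum fun y _ => ?_
      by_cases h : x = y
      · simp [h]
      · rw [if_neg h, if_neg h]
        have hp := hcoll x y h
        have hnn : (0:ℝ) ≤ (f x : ℝ)^2 * (f y : ℝ)^2 := by positivity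
        have := mul_le_mul_of_nonneg_left hp hnn
        simp only [hVdef]
        nlinarith
    have hsum_eq : (∑ x : Fin u, ∑ y : Fin u,
        (if x = y then (0:ℝ) else 2 * ((1 + ε) / r) * ((f x : ℝ)^2 * (f y : ℝ)^2)))
        = 2 * (1 + ε) * (F₂ ^ 2 - F₄) / r := by
      have hterm : ∀ x y : Fin u,
          (if x = y then (0:ℝ) else 2 * ((1 + ε) / r) * ((f x : ℝ)^2 * (f y : ℝ)^2))
          = 2 * ((1 + ε) / r) * ((f x : ℝ)^2 * (f y : ℝ)^2)
            - (if x = y then 2 * ((1 + ε) / r) * ((f x : ℝ)^2 * (f y : ℝ)^2) else 0) := by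
        intro x y; by_cases h : x = y <;> simp [h]
      simp only [hterm, Finset.sum_sub_distrib]
      have hA : (∑ x : Fin u, ∑ y : Fin u,
          2 * ((1 + ε) / r) * ((f x : ℝ)^2 * (f y : ℝ)^2))
          = 2 * ((1 + ε) / r) * F₂ ^ 2 := by
        rw [hF₂, sq, Finset.sum_mul_sum]
        simp only [← Finset.mul_sum]
      have hB : (∑ x : Fin u, ∑ y : Fin u,
          (if x = y then 2 * ((1 + ε) / r) * ((f x : ℝ)^2 * (f y : ℝ)^2) else 0))
          = 2 * ((1 + ε) / r) * F₄ := by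
        have hx : ∀ x : Fin u, (∑ y : Fin u,
            (if x = y then 2 * ((1 + ε) / r) * ((f x : ℝ)^2 * (f y : ℝ)^2) else 0))
            = 2 * ((1 + ε) / r) * (f x : ℝ)^4 := by
          intro x
          rw [Finset.sum_ite_eq]
          simp only [Finset.mem_univ, if_true]
          ring
        simp only [hx, ← Finset.mul_sum, hF₄]
      rw [hA, hB]
      ring
    calc variance X ℙ ≤ _ := hbound
      _ = _ := hsum_eq
  · have hF₄nn : 0 ≤ F₄ := by
      rw [hF₄]
      exact Finset.sum_nonneg fun x _ => by positivity
    have h1 : 2 * (1 + ε) * (F₂ ^ 2 - F₄) ≤ 2 * (1 + ε) * F₂ ^ 2 := by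
      have h2 : (0:ℝ) ≤ 2 * (1 + ε) := by positivity
      nlinarith
    rw [div_eq_mul_inv, div_eq_mul_inv]
    exact mul_le_mul_of_nonneg_right h1 (by positivity)
end

section
/- Let b ≥ 2, p = 2^b − 1, and 1 ≤ r ≤ 2^{b−1}. Let h(x) be uniformly distributed on [p] and define h_x = h(x) + 1, j_x = h_x mod 2^{b−1}, and i_x = ⌊r · j_x / 2^{b−1}⌋. Then Pr[i_x = 0] ≤ (1 + r/2^b)/r. -/
open MeasureTheory ProbabilityTheory

/-- Lemma 5, eq. (17): with `b ≥ 2`, `p = 2^b - 1`, `1 ≤ r ≤ 2^(b-1)`, `h(x)` uniform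
on `[p]`, `h_x = h(x) + 1`, `j_x = h_x mod 2^(b-1)` and `i_x = ⌊r·j_x/2^(b-1)⌋`, we
have `Pr[i_x = 0] ≤ (1 + r/2^b)/r`. -/
theorem stmt7
    {Ω : Type*} [MeasureSpace Ω] [IsProbabilityMeasure (ℙ : Measure Ω)]
    (b p r : ℕ) (hb : 2 ≤ b) (hp : p = 2 ^ b - 1) (hr : 1 ≤ r) (hrb : r ≤ 2 ^ (b - 1))
    (h : Ω → Fin p) (hmeas : Measurable h)
    (hunif : ∀ y : Fin p, ℙ {ω | h ω = y} = (p : ENNReal)⁻¹) :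
    (ℙ {ω | r * (((h ω : ℕ) + 1) % 2 ^ (b - 1)) / 2 ^ (b - 1) = 0}).toReal
      ≤ (1 + (r : ℝ) / 2 ^ b) / r := by
  classical
  set N : ℕ := 2 ^ (b - 1) with hN
  have hN0 : 0 < N := Nat.pow_pos (by norm_num)
  have hN2 : 2 ≤ N := by
    have : 2 ^ 1 ≤ 2 ^ (b - 1) := Nat.pow_le_pow_right (by norm_num) (by omega)
    simpa using this
  have h2b : 2 ^ b = 2 * N := by
    rw [hN, ← pow_succ']
    congr 1
    omega
  have hp1 : p + 1 = 2 * N := by omega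
  have hp0 : 0 < p := by omega
  set S : Finset (Fin p) :=
    Finset.univ.filter (fun y : Fin p => r * (((y : ℕ) + 1) % N) / N = 0) with hS
  -- rewrite the event as a finite union over S
  have hevent : {ω | r * (((h ω : ℕ) + 1) % 2 ^ (b - 1)) / 2 ^ (b - 1) = 0}
      = ⋃ y ∈ S, {ω | h ω = y} := by
    ext ω
    simp only [Set.mem_setOf_eq, Set.mem_iUnion, hS, Finset.mem_filter,
      Finset.mem_univ, true_and, ← hN]
    constructor
    · intro hω; exact ⟨h ω, hω, rfl⟩
    · rintro ⟨y, hy, rfl⟩; exact hy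
  have hmeasure : ℙ {ω | r * (((h ω : ℕ) + 1) % 2 ^ (b - 1)) / 2 ^ (b - 1) = 0}
      = S.card * (p : ENNReal)⁻¹ := by
    rw [hevent, measure_biUnion_finset]
    · simp [hunif, Finset.sum_const, mul_comm]
    · intro x _ y _ hxy
      simp only [Function.onFun]
      rw [Set.disjoint_left]
      intro ω hx hy
      exact hxy (hx ▸ hy ▸ rfl)
    · intro y _
      exact hmeas (measurableSet_singleton y)
  -- bound the cardinality of S
  set q : ℕ := (N - 1) / r with hq
  have hrq : r * q + 1 ≤ N := by
    have h2 : r * q ≤ N - 1 := by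
      rw [hq, mul_comm]; exact Nat.div_mul_le_self _ _
    omega
  have hcard : S.card ≤ 2 * q + 1 := by
    have hinj : ∀ y ∈ S, ∀ y' ∈ S,
        ((((y : Fin p) : ℕ) + 1) / N, (((y : Fin p) : ℕ) + 1) % N)
          = ((((y' : Fin p) : ℕ) + 1) / N, (((y' : Fin p) : ℕ) + 1) % N) → y = y' := by
      intro y _ y' _ hxy
      have h1 : ((y : ℕ) + 1) / N = ((y' : ℕ) + 1) / N := congrArg Prod.fst hxy
      have h2 : ((y : ℕ) + 1) % N = ((y' : ℕ) + 1) % N := congrArg Prod.snd hxy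
      have : (y : ℕ) + 1 = (y' : ℕ) + 1 := by
        conv_lhs => rw [← Nat.div_add_mod ((y : ℕ) + 1) N]
        conv_rhs => rw [← Nat.div_add_mod ((y' : ℕ) + 1) N]
        rw [h1, h2]
      exact Fin.ext (by omega)
    have hmaps : ∀ y ∈ S,
        ((((y : Fin p) : ℕ) + 1) / N, (((y : Fin p) : ℕ) + 1) % N)
          ∈ ((Finset.range 2 ×ˢ Finset.range (q + 1)).erase (0, 0)) := by
      intro y hy
      simp only [hS, Finset.mem_filter, Finset.mem_univ, true_and] at hy
      have hj : r * (((y : ℕ) + 1) % N) < N := by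
        have := (Nat.div_eq_zero_iff.mp hy).resolve_left (by omega)
        exact this
      have hjq : ((y : ℕ) + 1) % N ≤ q := by
        rw [hq, Nat.le_div_iff_mul_le hr, mul_comm]
        omega
      have hv : (y : ℕ) + 1 < 2 * N := by
        have := y.isLt
        omega
      have hdiv : ((y : ℕ) + 1) / N < 2 := Nat.div_lt_of_lt_mul (by omega)
      rw [Finset.mem_erase]
      constructor
      · intro hcontra
        have h1 : ((y : ℕ) + 1) / N = 0 := congrArg Prod.fst hcontra
        have h2 : ((y : ℕ) + 1) % N = 0 := congrArg Prod.snd hcontra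
        have : (y : ℕ) + 1 = 0 := by
          conv_lhs => rw [← Nat.div_add_mod ((y : ℕ) + 1) N, h1, h2]
          simp
        omega
      · rw [Finset.mem_product, Finset.mem_range, Finset.mem_range]
        exact ⟨hdiv, by omega⟩
    have := Finset.card_le_card_of_injOn _ hmaps hinj
    calc S.card ≤ ((Finset.range 2 ×ˢ Finset.range (q + 1)).erase (0, 0)).card := this
      _ ≤ 2 * q + 1 := by
          have hmem : ((0 : ℕ), (0 : ℕ)) ∈ Finset.range 2 ×ˢ Finset.range (q + 1) := by
            simp
          rw [Finset.card_erase_of_mem hmem, Finset.card_product]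
          simp [Finset.card_range]
          omega
  -- compute the toReal and finish with arithmetic
  rw [hmeasure]
  have hpne : (p : ENNReal) ≠ 0 := by exact_mod_cast Nat.cast_ne_zero.mpr (by omega)
  have hptop : (p : ENNReal) ≠ ⊤ := ENNReal.natCast_ne_top p
  have htoReal : ((S.card : ENNReal) * (p : ENNReal)⁻¹).toReal = (S.card : ℝ) / p := by
    rw [ENNReal.toReal_mul, ENNReal.toReal_inv]
    simp [div_eq_mul_inv]
  rw [htoReal]
  have hrpos : (0 : ℝ) < r := by exact_mod_cast hr
  have hppos : (0 : ℝ) < p := by exact_mod_cast hp0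
  rw [div_le_div_iff₀ hppos hrpos]
  have h2bR : (2 : ℝ) ^ b = (p : ℝ) + 1 := by
    have : (2 : ℝ) ^ b = ((2 ^ b : ℕ) : ℝ) := by push_cast; ring
    rw [this]
    have : (2 : ℕ) ^ b = p + 1 := by omega
    rw [this]; push_cast; ring
  rw [h2bR]
  have hcR : (S.card : ℝ) ≤ 2 * q + 1 := by exact_mod_cast hcard
  have hrqR : (r : ℝ) * q + 1 ≤ N := by exact_mod_cast hrq
  have hrNR : (r : ℝ) ≤ N := by exact_mod_cast hrb
  have hpNR : (p : ℝ) + 1 = 2 * N := by exact_mod_cast hp1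
  have hqR : (0 : ℝ) ≤ q := Nat.cast_nonneg q
  have hp1pos : (0 : ℝ) < (p : ℝ) + 1 := by linarith
  rw [show (1 + (r : ℝ) / ((p : ℝ) + 1)) * p = (((p : ℝ) + 1 + r) * p) / ((p : ℝ) + 1) by
    field_simp, le_div_iff₀ hp1pos]
  nlinarith [mul_pos hrpos hppos, mul_nonneg hqR hrpos.le]
end

section
/- Let b ≥ 2, p = 2^b − 1, and 1 ≤ r ≤ 2^{b−1}. Let h(x) and h(y) be independent, each uniformly distributed on [p] (as holds for distinct keys x ≠ y under a 2-universal hash function into [p]), and define for z ∈ {x,y}: h_z = h(z) + 1, j_z = h_z mod 2^{b−1}, i_z = ⌊r · j_z / 2^{b−1}⌋. Then Pr[i_x = i_y] ≤ (1 + (r/2^b)²)/r. -/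
open MeasureTheory ProbabilityTheory

open Finset
-- fiber of mod map
example (m : ℕ) (hm : 2 ≤ m) (j : ℕ) (hj : j < m) :
    ((Finset.range (2*m-1)).filter (fun v => (v+1) % m = j)).card
      = if j = 0 then 1 else 2 := by
  have key : ∀ v, v < 2*m-1 → (v+1) % m = (if v+1 < m then v+1 else v+1-m) := by
    intro v hv
    split
    · exact Nat.mod_eq_of_lt ‹_›
    · rw [Nat.mod_eq_sub_mod (by omega), Nat.mod_eq_of_lt (by omega)]
  split
  · subst ‹j = 0›
    have : (Finset.range (2*m-1)).filter (fun v => (v+1) % m = 0) = {m-1} := by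
      ext v
      simp only [mem_filter, mem_range, mem_singleton]
      constructor
      · rintro ⟨h1, h2⟩; rw [key v h1] at h2; split at h2 <;> omega
      · rintro rfl; rw [key (m-1) (by omega)]; constructor; omega; split <;> omega
    rw [this]; rfl
  · have : (Finset.range (2*m-1)).filter (fun v => (v+1) % m = j) = {j-1, j+m-1} := by
      ext v
      simp only [mem_filter, mem_range, mem_insert, mem_singleton]
      constructor
      · rintro ⟨h1, h2⟩; rw [key v h1] at h2; split at h2 <;> omega
      · rintro (rfl | rfl)
        · rw [key (j-1) (by omega)]; refine ⟨by omega, ?_⟩; split <;> omega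
        · rw [key (j+m-1) (by omega)]; refine ⟨by omega, ?_⟩; split <;> omega
    rw [this, Finset.card_insert_of_notMem (by simp; omega), Finset.card_singleton]
open Finset
theorem bucket_eq_Ico (m r : ℕ) (hm : 1 ≤ m) (hr : 1 ≤ r) (hrm : r ≤ m) (i : ℕ) (hi : i < r) :
    ((Finset.range m).filter (fun j => r*j/m = i))
      = Finset.Ico ((i*m + r - 1)/r) (((i+1)*m + r - 1)/r) := by
  have hle : ∀ x j : ℕ, (x + r - 1)/r ≤ j ↔ x ≤ r*j := by
    intro x j
    rw [Nat.div_le_iff_le_mul_add_pred (by omega)]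
    omega
  have hceil_le : ((i+1)*m + r - 1)/r ≤ m := by
    rw [Nat.div_le_iff_le_mul_add_pred (by omega)]
    have : (i+1)*m ≤ r*m := Nat.mul_le_mul_right _ (by omega)
    omega
  ext j
  simp only [mem_filter, mem_range, mem_Ico]
  constructor
  · rintro ⟨h1, h2⟩
    constructor
    · rw [hle]; calc i*m ≤ (r*j/m)*m := by rw [h2]
        _ ≤ r*j := Nat.div_mul_le_self _ _
    · by_contra h
      push_neg at h
      rw [hle] at h
      have : i + 1 ≤ r*j/m := Nat.le_div_iff_mul_le (by omega) |>.2 (by linarith)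
      omega
  · rintro ⟨h1, h2⟩
    rw [hle] at h1
    have h2' : r * j < (i+1)*m := by
      by_contra h
      push_neg at h
      exact absurd ((hle _ _).2 h) (by omega)
    have hjm : j < m := by omega
    refine ⟨hjm, ?_⟩
    have a1 : i ≤ r*j/m := Nat.le_div_iff_mul_le (by omega) |>.2 (by linarith)
    have a2 : r*j/m < i+1 := Nat.div_lt_iff_lt_mul (by omega) |>.2 (by linarith)
    omega
theorem nlow (m r i : ℕ) (hr : 1 ≤ r) :
    (i*m + r - 1)/r + m/r ≤ ((i+1)*m + r - 1)/r := by
  have h0 := Nat.add_div_le_add_div (i*m + r - 1) m r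
  have h1 : (i*m + r - 1) + m = (i+1)*m + r - 1 := by ring_nf; omega
  rw [h1] at h0
  omega
theorem nhigh (m r i : ℕ) (hr : 1 ≤ r) :
    ((i+1)*m + r - 1)/r ≤ (i*m + r - 1)/r + m/r + 1 := by
  have h1 : (i+1)*m + r - 1 = (i*m + r - 1) + m := by ring_nf; omega
  rw [h1, Nat.add_div (by omega)]
  split <;> omega
theorem nexact (m r i : ℕ) (hr : 1 ≤ r) (hd : m % r = 0) :
    (i*m + r - 1)/r = i*(m/r) := by
  obtain ⟨q, rfl⟩ : r ∣ m := Nat.dvd_of_mod_eq_zero hd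
  rw [Nat.mul_div_cancel_left _ (by omega),
    show i*(r*q) + r - 1 = r*(i*q) + (r-1) by ring_nf; omega,
    Nat.mul_add_div (by omega), Nat.div_eq_of_lt (by omega)]
  omega
theorem coreineq1 (q s r m : ℤ) (hq : 1 ≤ q) (hs : 1 ≤ s) (hsr : s < r) (hm : m = r*q + s) (hm2 : 2 ≤ m) (hrm : r ≤ m) :
    4*m^2*r*(4*(r*q^2+2*q*s+s) - 4*(q+1) + 1) ≤ (2*m-1)^2*(4*m^2+r^2) := by
  have key : r*(4*(r*q^2+2*q*s+s) - 4*(q+1) + 1) = (2*m-1)^2 + (r*(r-2) + r) - (r-2*s+1)^2 := by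
    rw [hm]; ring
  have h1 : 4*m^2*(r*(r-2)+r) ≤ r^2*(2*m-1)^2 := by nlinarith [sq_nonneg (m-r), sq_nonneg m]
  nlinarith [sq_nonneg ((r:ℤ)-2*s+1), sq_nonneg m]
theorem coreineq0 (q r m : ℤ) (hq : 1 ≤ q) (hr : 1 ≤ r) (hm : m = r*q) (hm2 : 2 ≤ m) (hrm : r ≤ m) :
    4*m^2*r*(4*(r*q^2) - 4*q + 1) ≤ (2*m-1)^2*(4*m^2+r^2) := by
  have key : r*(4*(r*q^2) - 4*q + 1) = (2*m-1)^2 + (r - 1) := by rw [hm]; ring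
  have h1 : 4*m^2*(r-1) ≤ r^2*(2*m-1)^2 := by nlinarith [sq_nonneg (r-2), sq_nonneg (m-1), sq_nonneg m]
  nlinarith [sq_nonneg m]

theorem modfiber (m : ℕ) (hm : 2 ≤ m) (j : ℕ) (hj : j < m) :
    ((Finset.range (2*m-1)).filter (fun v => (v+1) % m = j)).card
      = if j = 0 then 1 else 2 := by
  have key : ∀ v, v < 2*m-1 → (v+1) % m = (if v+1 < m then v+1 else v+1-m) := by
    intro v hv
    split
    · exact Nat.mod_eq_of_lt ‹_›
    · rw [Nat.mod_eq_sub_mod (by omega), Nat.mod_eq_of_lt (by omega)]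
  split
  · subst ‹j = 0›
    have : (Finset.range (2*m-1)).filter (fun v => (v+1) % m = 0) = {m-1} := by
      ext v
      simp only [mem_filter, mem_range, mem_singleton]
      constructor
      · rintro ⟨h1, h2⟩; rw [key v h1] at h2; split at h2 <;> omega
      · rintro rfl; rw [key (m-1) (by omega)]; constructor; omega; split <;> omega
    rw [this]; rfl
  · have : (Finset.range (2*m-1)).filter (fun v => (v+1) % m = j) = {j-1, j+m-1} := by
      ext v
      simp only [mem_filter, mem_range, mem_insert, mem_singleton]
      constructor
      · rintro ⟨h1, h2⟩; rw [key v h1] at h2; split at h2 <;> omega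
      · rintro (rfl | rfl)
        · rw [key (j-1) (by omega)]; refine ⟨by omega, ?_⟩; split <;> omega
        · rw [key (j+m-1) (by omega)]; refine ⟨by omega, ?_⟩; split <;> omega
    rw [this, Finset.card_insert_of_notMem (by simp; omega), Finset.card_singleton]

theorem key_count (m r : ℕ) (hm : 2 ≤ m) (hr : 1 ≤ r) (hrm : r ≤ m) :
    4*m^2*r*(∑ i ∈ Finset.range r,
        (((Finset.range (2*m-1)).filter (fun v => r*((v+1)%m)/m = i)).card)^2)
      ≤ (2*m-1)^2*(4*m^2+r^2) := by
  set q := m / r with hq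
  set s := m % r with hs
  have hmqs : r * q + s = m := Nat.div_add_mod m r
  have hq1 : 1 ≤ q := (Nat.one_le_div_iff (by omega)).2 hrm
  have hsr : s < r := Nat.mod_lt _ (by omega)
  set n : ℕ → ℕ := fun i => ((Finset.range m).filter (fun j => r*j/m = i)).card with hn
  set c : ℕ → ℕ := fun i =>
    ((Finset.range (2*m-1)).filter (fun v => r*((v+1)%m)/m = i)).card with hcdef
  have hflt : ∀ j, j < m → r*j/m < r := by
    intro j hj
    rw [Nat.div_lt_iff_lt_mul (by omega)]
    exact (mul_lt_mul_iff_right₀ (show 0 < r by omega)).2 hj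
  -- bounds on n
  have hncard : ∀ i, i < r → n i = ((i+1)*m + r - 1)/r - (i*m + r - 1)/r := by
    intro i hi
    rw [hn]
    simp only
    rw [bucket_eq_Ico m r (by omega) hr hrm i hi, Nat.card_Ico]
  have hbound : ∀ i, i < r → q ≤ n i ∧ n i ≤ q + 1 := by
    intro i hi
    rw [hncard i hi]
    have h1 := nlow m r i hr
    have h2 := nhigh m r i hr
    omega
  -- value of n 0
  have ha0 : (0*m + r - 1)/r = 0 := by
    rw [Nat.zero_mul, Nat.zero_add]; exact Nat.div_eq_of_lt (by omega)
  have hn0 : n 0 = if s = 0 then q else q + 1 := by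
    rw [hncard 0 (by omega), ha0, Nat.sub_zero]
    split
    · rw [nexact m r 1 hr ‹_›]; omega
    · have hrq : r*(q+1) = r*q + r := by ring
      have h1 : (0+1)*m + r - 1 = r*(q+1) + (s-1) := by omega
      rw [h1, Nat.mul_add_div (by omega), Nat.div_eq_of_lt (by omega)]
  -- sum of n
  have hsumn : ∑ i ∈ Finset.range r, n i = m := by
    have := Finset.card_eq_sum_card_fiberwise (s := Finset.range m)
      (t := Finset.range r) (f := fun j => r*j/m)
      (fun j hj => Finset.mem_range.2 (hflt j (Finset.mem_range.1 hj)))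
    rw [Finset.card_range] at this
    exact this.symm
  -- c in terms of n
  have hcval : ∀ i, i < r → (c i : ℤ) = 2*(n i : ℤ) - (if i = 0 then 1 else 0) := by
    intro i hi
    have hfib : c i = ∑ j ∈ Finset.range m,
        (((Finset.range (2*m-1)).filter (fun v => r*((v+1)%m)/m = i)).filter
          (fun v => (v+1)%m = j)).card := by
      exact Finset.card_eq_sum_card_fiberwise
        (fun v _ => Finset.mem_range.2 (Nat.mod_lt _ (by omega)))
    have hinner : ∀ j ∈ Finset.range m,
        (((Finset.range (2*m-1)).filter (fun v => r*((v+1)%m)/m = i)).filter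
          (fun v => (v+1)%m = j)).card
        = if r*j/m = i then (if j = 0 then 1 else 2) else 0 := by
      intro j hj
      rw [Finset.filter_filter]
      split
      · rw [← modfiber m hm j (Finset.mem_range.1 hj)]
        congr 1
        ext v
        simp only [Finset.mem_filter, Finset.mem_range]
        constructor
        · rintro ⟨h1, _, h3⟩; exact ⟨h1, h3⟩
        · rintro ⟨h1, h2⟩; exact ⟨h1, by rw [h2]; assumption, h2⟩
      · rw [Finset.card_eq_zero.2]
        ext v
        simp only [Finset.mem_filter, Finset.mem_range, Finset.notMem_empty, iff_false]
        rintro ⟨h1, h2, h3⟩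
        rw [h3] at h2
        exact ‹¬ _› h2
    rw [Finset.sum_congr rfl hinner, ← Finset.sum_filter] at hfib
    rcases eq_or_ne i 0 with rfl | hi0
    · have h0mem : 0 ∈ (Finset.range m).filter (fun j => r*j/m = 0) := by
        simp only [Finset.mem_filter, Finset.mem_range]
        exact ⟨by omega, by simp⟩
      rw [← Finset.add_sum_erase _ _ h0mem] at hfib
      have herase : ∑ j ∈ ((Finset.range m).filter (fun j => r*j/m = 0)).erase 0,
          (if j = 0 then 1 else 2) = 2 * (n 0 - 1) := by
        rw [Finset.sum_congr rfl (fun j hj => if_neg (Finset.ne_of_mem_erase hj)),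
          Finset.sum_const, Finset.card_erase_of_mem h0mem, smul_eq_mul]
        have hfold : #(Finset.filter (fun j => r * j / m = 0) (Finset.range m)) = n 0 := rfl
        rw [hfold]
        omega
      rw [herase, if_pos rfl] at hfib
      have hn0ge : 1 ≤ n 0 := le_trans hq1 (hbound 0 (by omega)).1
      simp only [if_pos rfl, if_true]
      omega
    · have hne : ∀ j ∈ (Finset.range m).filter (fun j => r*j/m = i), ¬ (j = 0) := by
        intro j hj hj0
        subst hj0
        simp only [Finset.mem_filter, Finset.mem_range] at hj
        rw [Nat.mul_zero, Nat.zero_div] at hj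
        exact hi0 hj.2.symm
      rw [Finset.sum_congr rfl (fun j hj => if_neg (hne j hj)), Finset.sum_const,
        smul_eq_mul] at hfib
      simp only [if_neg hi0]
      rw [hfib, hn]
      push_cast
      ring
  -- sum of squares of n
  have hsumd : ∑ i ∈ Finset.range r, ((n i : ℤ) - q) = s := by
    have : ∑ i ∈ Finset.range r, ((n i : ℤ) - q)
        = (∑ i ∈ Finset.range r, (n i : ℤ)) - r * q := by
      rw [Finset.sum_sub_distrib, Finset.sum_const, Finset.card_range]
      ring
    rw [this]
    have h2 : ((∑ i ∈ Finset.range r, n i : ℕ) : ℤ) = (m : ℤ) := by exact_mod_cast hsumn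
    push_cast at h2
    rw [h2]
    omega
  have hsumsq : ∑ i ∈ Finset.range r, (n i : ℤ)^2 = r*q^2 + 2*q*s + s := by
    have hterm : ∀ i ∈ Finset.range r,
        (n i : ℤ)^2 = q^2 + (2*q+1)*((n i : ℤ) - q) := by
      intro i hi
      have hb := hbound i (Finset.mem_range.1 hi)
      have : (n i : ℤ) - q = 0 ∨ (n i : ℤ) - q = 1 := by omega
      rcases this with h | h <;> [nlinarith; nlinarith]
    rw [Finset.sum_congr rfl hterm, Finset.sum_add_distrib, Finset.sum_const,
      Finset.card_range, ← Finset.mul_sum, hsumd]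
    push_cast
    ring
  -- sum of squares of c
  have hsumc : ∑ i ∈ Finset.range r, (c i : ℤ)^2
      = 4*(r*q^2 + 2*q*s + s) - 4*(n 0 : ℤ) + 1 := by
    have hterm : ∀ i ∈ Finset.range r,
        (c i : ℤ)^2 = 4*(n i : ℤ)^2 - (if i = 0 then 4*(n i : ℤ) - 1 else 0) := by
      intro i hi
      rw [hcval i (Finset.mem_range.1 hi)]
      split <;> ring
    rw [Finset.sum_congr rfl hterm, Finset.sum_sub_distrib, ← Finset.mul_sum, hsumsq,
      Finset.sum_ite_eq' (Finset.range r) 0 (fun i => 4*(n i : ℤ) - 1),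
      if_pos (Finset.mem_range.2 (by omega))]
    ring
  -- conclude
  rw [← @Nat.cast_le ℤ]
  push_cast [Nat.cast_sub (show 1 ≤ 2*m by omega)]
  rw [hsumc, hn0]
  rcases eq_or_ne s 0 with hs0 | hs0
  · rw [if_pos hs0]
    have := coreineq0 (q : ℤ) (r : ℤ) (m : ℤ) (by exact_mod_cast hq1)
      (by exact_mod_cast hr) (by push_cast; omega) (by exact_mod_cast hm)
      (by exact_mod_cast hrm)
    calc 4*(m:ℤ)^2*r*(4*(r*q^2 + 2*q*s + s) - 4*q + 1)
        = 4*(m:ℤ)^2*r*(4*(r*q^2) - 4*q + 1) := by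
          have : (s : ℤ) = 0 := by exact_mod_cast hs0
          rw [this]; ring
      _ ≤ _ := this
  · rw [if_neg hs0]
    push_cast
    exact coreineq1 (q : ℤ) (s : ℤ) (r : ℤ) (m : ℤ) (by exact_mod_cast hq1)
      (by omega) (by exact_mod_cast hsr) (by push_cast; omega) (by exact_mod_cast hm)
      (by exact_mod_cast hrm)


/-- Lemma 5, eq. (18): with `b ≥ 2`, `p = 2^b - 1`, `1 ≤ r ≤ 2^(b-1)`, and `h(x)`, `h(y)`
independent uniform on `[p]`, setting `h_z = h(z) + 1`, `j_z = h_z mod 2^(b-1)`,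
`i_z = ⌊r·j_z/2^(b-1)⌋` for `z ∈ {x,y}`, we have `Pr[i_x = i_y] ≤ (1 + (r/2^b)²)/r`. -/
theorem stmt8
    {Ω : Type*} [MeasureSpace Ω] [IsProbabilityMeasure (ℙ : Measure Ω)]
    (b p r : ℕ) (hb : 2 ≤ b) (hp : p = 2 ^ b - 1) (hr : 1 ≤ r) (hrb : r ≤ 2 ^ (b - 1))
    (hx hy : Ω → Fin p) (hxmeas : Measurable hx) (hymeas : Measurable hy)
    (hjoint : ∀ y z : Fin p,
      ℙ {ω | hx ω = y ∧ hy ω = z} = (p : ENNReal)⁻¹ * (p : ENNReal)⁻¹) :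
    (ℙ {ω | r * (((hx ω : ℕ) + 1) % 2 ^ (b - 1)) / 2 ^ (b - 1)
          = r * (((hy ω : ℕ) + 1) % 2 ^ (b - 1)) / 2 ^ (b - 1)}).toReal
      ≤ (1 + ((r : ℝ) / 2 ^ b) ^ 2) / r := by
  set m : ℕ := 2 ^ (b - 1) with hm
  have hm2 : 2 ≤ m := by
    rw [hm]
    calc 2 = 2^1 := rfl
    _ ≤ 2^(b-1) := Nat.pow_le_pow_right (by omega) (by omega)
  have h2b : 2 ^ b = 2 * m := by
    rw [hm, ← pow_succ']
    congr 1
    omega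
  have hpm : p = 2 * m - 1 := by omega
  have hp3 : 3 ≤ p := by omega
  set g : ℕ → ℕ := fun v => r * ((v + 1) % m) / m with hg
  set F : Fin p → ℕ := fun v => g (v : ℕ) with hF
  set A : Fin p × Fin p → Set Ω := fun yz => {ω | hx ω = yz.1 ∧ hy ω = yz.2} with hA
  set S : Finset (Fin p × Fin p) := Finset.univ.filter (fun yz => F yz.1 = F yz.2) with hS
  -- event as disjoint union
  have hev : {ω | r * (((hx ω : ℕ) + 1) % 2 ^ (b - 1)) / 2 ^ (b - 1)
          = r * (((hy ω : ℕ) + 1) % 2 ^ (b - 1)) / 2 ^ (b - 1)}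
      = ⋃ yz ∈ S, A yz := by
    ext ω
    simp only [Set.mem_setOf_eq, Set.mem_iUnion, hA, hS, Finset.mem_filter,
      Finset.mem_univ, true_and]
    constructor
    · intro h
      exact ⟨(hx ω, hy ω), h, rfl, rfl⟩
    · rintro ⟨yz, h1, h2, h3⟩
      rw [hF, hg] at h1
      simp only at h1
      rw [h2, h3]
      exact h1
  have hdisj : (S : Set (Fin p × Fin p)).PairwiseDisjoint A := by
    intro yz _ yz' _ hne
    rw [Function.onFun, Set.disjoint_left]
    rintro ω ⟨h1, h2⟩ ⟨h3, h4⟩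
    exact hne (Prod.ext (h1 ▸ h3 ▸ rfl) (h2 ▸ h4 ▸ rfl))
  have hmeasA : ∀ yz ∈ S, MeasurableSet (A yz) := by
    intro yz _
    exact (hxmeas (MeasurableSet.singleton yz.1)).inter
      (hymeas (MeasurableSet.singleton yz.2))
  have hmeasure : ℙ (⋃ yz ∈ S, A yz) = S.card * ((p : ENNReal)⁻¹ * (p : ENNReal)⁻¹) := by
    rw [measure_biUnion_finset hdisj hmeasA]
    rw [Finset.sum_congr rfl (fun yz _ => hjoint yz.1 yz.2), Finset.sum_const,
      nsmul_eq_mul]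
  -- card of S
  set cN : ℕ → ℕ := fun i => ((Finset.range p).filter (fun v => g v = i)).card with hcN
  have hglt : ∀ v, g v < r := by
    intro v
    rw [hg]
    simp only
    rw [Nat.div_lt_iff_lt_mul (by omega)]
    exact (mul_lt_mul_iff_right₀ (show 0 < r by omega)).2 (Nat.mod_lt _ (by omega))
  have hScard : S.card = ∑ i ∈ Finset.range r, (cN i)^2 := by
    have hbij : S.card = (((Finset.range p) ×ˢ (Finset.range p)).filter
        (fun yz => g yz.1 = g yz.2)).card := by
      apply Finset.card_bij (fun a _ => ((a.1 : ℕ), (a.2 : ℕ)))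
      · rintro ⟨y, z⟩ ha
        simp only [hS, Finset.mem_filter, Finset.mem_univ, true_and] at ha
        simp only [Finset.mem_filter, Finset.mem_product, Finset.mem_range]
        exact ⟨⟨y.2, z.2⟩, ha⟩
      · rintro ⟨y, z⟩ _ ⟨y', z'⟩ _ h
        simp only [Prod.mk.injEq] at h
        exact Prod.ext (Fin.val_injective h.1) (Fin.val_injective h.2)
      · rintro ⟨u, v⟩ hb
        simp only [Finset.mem_filter, Finset.mem_product, Finset.mem_range] at hb
        exact ⟨(⟨u, hb.1.1⟩, ⟨v, hb.1.2⟩), by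
          simp only [hS, Finset.mem_filter, Finset.mem_univ, true_and]
          exact hb.2, rfl⟩
    rw [hbij]
    rw [Finset.card_eq_sum_card_fiberwise
      (f := fun yz => g yz.1) (t := Finset.range r)
      (fun yz _ => Finset.mem_range.2 (hglt _))]
    apply Finset.sum_congr rfl
    intro i _
    have : (((Finset.range p) ×ˢ (Finset.range p)).filter
          (fun yz => g yz.1 = g yz.2)).filter (fun yz => g yz.1 = i)
        = ((Finset.range p).filter (fun v => g v = i)) ×ˢ
          ((Finset.range p).filter (fun v => g v = i)) := by
      ext ⟨u, v⟩
      simp only [Finset.mem_filter, Finset.mem_product, Finset.mem_range]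
      constructor
      · rintro ⟨⟨⟨h1, h2⟩, h3⟩, h4⟩
        exact ⟨⟨h1, h4⟩, ⟨h2, h3 ▸ h4⟩⟩
      · rintro ⟨⟨h1, h2⟩, h3, h4⟩
        exact ⟨⟨⟨h1, h3⟩, by rw [h2, h4]⟩, h2⟩
    rw [this, Finset.card_product]
    rw [hcN]
    ring
  -- the counting bound
  have hcount := key_count m r hm2 hr hrb
  rw [show 2*m - 1 = p by omega] at hcount
  rw [← hScard] at hcount
  -- compute the measure
  rw [hev, hmeasure]
  have htoReal : ((S.card : ENNReal) * ((p : ENNReal)⁻¹ * (p : ENNReal)⁻¹)).toReal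
      = (S.card : ℝ) * ((p : ℝ)⁻¹ * (p : ℝ)⁻¹) := by
    simp [ENNReal.toReal_mul, ENNReal.toReal_inv]
  rw [htoReal]
  -- final numeric inequality
  have hpR : (0 : ℝ) < p := by exact_mod_cast by omega
  have hrR : (0 : ℝ) < r := by exact_mod_cast hr
  have hmR : (0 : ℝ) < m := by exact_mod_cast by omega
  have hineqR : (S.card : ℝ) * (4 * m^2 * r) ≤ (p:ℝ)^2 * (4*m^2 + r^2) := by
    have := hcount
    have hc' : ((4*m^2*r*S.card : ℕ) : ℝ) ≤ ((p^2*(4*m^2+r^2) : ℕ) : ℝ) := by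
      exact_mod_cast this
    push_cast at hc'
    nlinarith [hc']
  have h2bR : ((2:ℝ))^b = 2 * m := by exact_mod_cast h2b
  rw [h2bR]
  rw [show (S.card : ℝ) * ((p : ℝ)⁻¹ * (p : ℝ)⁻¹) = (S.card : ℝ) / (p^2) by
    rw [pow_two, div_eq_mul_inv, mul_inv]]
  rw [div_le_div_iff₀ (by positivity) hrR]
  have hrhs : (1 + ((r:ℝ) / (2*m))^2) = (4*m^2 + r^2) / (4*m^2) := by
    field_simp
    ring
  rw [hrhs]
  rw [div_mul_eq_mul_div, le_div_iff₀ (by positivity)]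
  nlinarith [hineqR]
end

section
/- Let b ≥ 2, p = 2^b − 1, and 1 ≤ r ≤ 2^{b−1}. Let h : [u] → [p] be a k-universal random hash function and define for each key x: h_x = h(x) + 1, j_x = h_x mod 2^{b−1}, i_x = ⌊r · j_x / 2^{b−1}⌋, a_x = ⌊h_x / 2^{b−1}⌋, and s_x = 2·a_x − 1 ∈ {−1,1}. Then for any j ≤ k distinct keys x₀,...,x_{j−1} ∈ [u] and any real-valued function A of (i_{x₀},...,i_{x_{j−1}}, s_{x₁},...,s_{x_{j−1}}) (i.e., A does not depend on s_{x₀}): E[s_{x₀}·A] = E[A | i_{x₀} = 0]/p. -/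
open MeasureTheory ProbabilityTheory

private lemma alg_helper (P W Sc : ℝ) (n : ℕ) (hP : P ≠ 0) (hSc : Sc ≠ 0) :
    P⁻¹ ^ n * W = P⁻¹ ^ n * (Sc * W) / (Sc * (P ^ n / P) * P⁻¹ ^ n) / P := by
  have hPn : P ^ n ≠ 0 := pow_ne_zero _ hP
  rw [inv_pow]
  field_simp

private lemma sum_comp_integral {Ω : Type*} [MeasureSpace Ω] [IsProbabilityMeasure (ℙ : Measure Ω)]
    {κ : Type*} [Fintype κ] (Y : Ω → κ) (hY : ∀ c : κ, MeasurableSet (Y ⁻¹' {c}))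
    (g : κ → ℝ) :
    ∫ ω, g (Y ω) = ∑ c : κ, (ℙ (Y ⁻¹' {c})).toReal * g c := by
  classical
  have h1 : (fun ω => g (Y ω)) = fun ω => ∑ c : κ, Set.indicator (Y ⁻¹' {c}) (fun _ => g c) ω := by
    funext ω
    rw [Finset.sum_eq_single (Y ω)]
    · simp
    · intro c _ hc
      apply Set.indicator_of_notMem
      simp [Ne.symm hc]
    · simp
  rw [h1, integral_finset_sum]
  · exact Finset.sum_congr rfl fun c _ => by
      rw [integral_indicator_const _ (hY c), smul_eq_mul]
      rfl
  · intro c _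
    exact (integrable_const _).indicator (hY c)

private lemma fiber_sum {n p : ℕ} (z : Fin n) (c₀ : Fin p) (S : Finset (Fin p))
    (F : (Fin n → Fin p) → ℝ) :
    ∑ y ∈ Finset.univ.filter (fun y : Fin n → Fin p => y z ∈ S), F (Function.update y z c₀)
      = (S.card : ℝ) * ∑ y ∈ Finset.univ.filter (fun y : Fin n → Fin p => y z = c₀), F y := by
  classical
  have key : ∑ y ∈ Finset.univ.filter (fun y : Fin n → Fin p => y z ∈ S), F (Function.update y z c₀)
      = ∑ cw ∈ S ×ˢ (Finset.univ.filter (fun y : Fin n → Fin p => y z = c₀)), F cw.2 := by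
    apply Finset.sum_nbij' (i := fun y => (y z, Function.update y z c₀))
      (j := fun cw => Function.update cw.2 z cw.1)
    · intro a ha
      simp only [Finset.mem_filter, Finset.mem_univ, true_and] at ha
      simp [Finset.mem_product, ha]
    · intro cw hcw
      simp only [Finset.mem_product, Finset.mem_filter, Finset.mem_univ, true_and] at hcw
      simp [hcw.1]
    · intro a _
      simp [Function.update_idem, Function.update_eq_self]
    · intro cw hcw
      simp only [Finset.mem_product, Finset.mem_filter, Finset.mem_univ, true_and] at hcw
      ext
      · simp
      · simp [Function.update_idem, ← hcw.2, Function.update_eq_self]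
    · intro a _
      rfl
  rw [key, Finset.sum_product]
  simp [Finset.sum_const, nsmul_eq_mul]

/-- Lemma 6 (sign near cancellation, arbitrary number of buckets): with `b ≥ 2`,
`p = 2^b - 1`, `1 ≤ r ≤ 2^(b-1)`, `h : [u] → [p]` a `k`-universal random hash function,
`h_x = h(x) + 1`, `j_x = h_x mod 2^(b-1)`, `i_x = ⌊r·j_x/2^(b-1)⌋`,
`a_x = ⌊h_x/2^(b-1)⌋`, `s_x = 2a_x - 1`, for any `j ≤ k` distinct keys and any
real-valued `A` not depending on `s_{x₀}`: `E[s_{x₀}·A] = E[A | i_{x₀} = 0]/p`. -/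
theorem stmt9
    {Ω : Type*} [MeasureSpace Ω] [IsProbabilityMeasure (ℙ : Measure Ω)]
    (b u p r k : ℕ) (hb : 2 ≤ b) (hp : p = 2 ^ b - 1)
    (hr : 1 ≤ r) (hrb : r ≤ 2 ^ (b - 1))
    (h : Ω → Fin u → Fin p)
    (hmeas : ∀ x : Fin u, Measurable fun ω => h ω x)
    (huniv : ∀ j : ℕ, j ≤ k → ∀ x : Fin j → Fin u, Function.Injective x →
      ∀ y : Fin j → Fin p,
        ℙ {ω | ∀ m : Fin j, h ω (x m) = y m} = (p : ENNReal)⁻¹ ^ j)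
    (i : Ω → Fin u → ℕ)
    (hi : ∀ ω x, i ω x = r * (((h ω x : ℕ) + 1) % 2 ^ (b - 1)) / 2 ^ (b - 1))
    (s : Ω → Fin u → ℝ)
    (hs : ∀ ω x, s ω x = 2 * ((((h ω x : ℕ) + 1) / 2 ^ (b - 1) : ℕ) : ℝ) - 1)
    (j : ℕ) (hj : j ≤ k) (hj0 : 0 < j)
    (x : Fin j → Fin u) (hx : Function.Injective x)
    (A : (Fin j → ℕ) → (Fin j → ℝ) → ℝ)
    (hA : ∀ (iv : Fin j → ℕ) (sv sv' : Fin j → ℝ),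
      (∀ m : Fin j, m ≠ ⟨0, hj0⟩ → sv m = sv' m) → A iv sv = A iv sv') :
    ∫ ω, s ω (x ⟨0, hj0⟩) * A (fun m => i ω (x m)) (fun m => s ω (x m)) =
      ((∫ ω in {ω | i ω (x ⟨0, hj0⟩) = 0},
          A (fun m => i ω (x m)) (fun m => s ω (x m))) /
        (ℙ {ω | i ω (x ⟨0, hj0⟩) = 0}).toReal) / (p : ℝ) := by
  classical
  have hq2 : 2 ≤ 2 ^ (b - 1) := by
    calc 2 = 2 ^ 1 := rfl
    _ ≤ 2 ^ (b - 1) := Nat.pow_le_pow_right (by norm_num) (by omega)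
  set q := 2 ^ (b - 1) with hqdef
  have h2b : 2 * q = 2 ^ b := by
    rw [hqdef, ← pow_succ']
    congr 1
    omega
  have hpq : p = 2 * q - 1 := by omega
  have hp3 : 3 ≤ p := by omega
  have hp0R : (p : ℝ) ≠ 0 := by
    have : (0:ℝ) < p := by exact_mod_cast Nat.lt_of_lt_of_le (by norm_num) hp3
    linarith
  set z : Fin j := ⟨0, hj0⟩ with hzdef
  set ic : Fin p → ℕ := fun c => r * (((c : ℕ) + 1) % q) / q with hicdef
  set sc : Fin p → ℝ := fun c => 2 * ((((c : ℕ) + 1) / q : ℕ) : ℝ) - 1 with hscdef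
  set Y : Ω → Fin j → Fin p := fun ω m => h ω (x m) with hYdef
  set Av : (Fin j → Fin p) → ℝ := fun y => A (fun m => ic (y m)) (fun m => sc (y m)) with hAvdef
  have hiY : ∀ ω m, i ω (x m) = ic (Y ω m) := fun ω m => hi ω (x m)
  have hsY : ∀ ω m, s ω (x m) = sc (Y ω m) := fun ω m => hs ω (x m)
  -- measurability of fibers
  have hYm : ∀ yv : Fin j → Fin p, MeasurableSet (Y ⁻¹' {yv}) := by
    intro yv
    have hset : Y ⁻¹' {yv} = ⋂ m, (fun ω => h ω (x m)) ⁻¹' {yv m} := by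
      ext ω
      simp [hYdef, funext_iff]
    rw [hset]
    exact MeasurableSet.iInter fun m => hmeas (x m) (measurableSet_singleton _)
  have hPy : ∀ yv, ℙ (Y ⁻¹' {yv}) = (p : ENNReal)⁻¹ ^ j := by
    intro yv
    have hset : Y ⁻¹' {yv} = {ω | ∀ m : Fin j, h ω (x m) = yv m} := by
      ext ω
      simp [hYdef, funext_iff]
    rw [hset]
    exact huniv j hj x hx yv
  have hPyR : ∀ yv, (ℙ (Y ⁻¹' {yv})).toReal = ((p : ℝ)⁻¹) ^ j := by
    intro yv
    rw [hPy]
    simp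
  have hint : ∀ g : (Fin j → Fin p) → ℝ,
      ∫ ω, g (Y ω) = ∑ yv : Fin j → Fin p, ((p : ℝ)⁻¹) ^ j * g yv := by
    intro g
    rw [sum_comp_integral Y hYm g]
    exact Finset.sum_congr rfl fun yv _ => by rw [hPyR]
  -- LHS
  have hL : (∫ ω, s ω (x z) * A (fun m => i ω (x m)) (fun m => s ω (x m)))
      = ∑ yv : Fin j → Fin p, ((p : ℝ)⁻¹) ^ j * (sc (yv z) * Av yv) := by
    rw [← hint (fun yv => sc (yv z) * Av yv)]
    congr 1
    funext ω
    rw [hsY ω z]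
    congr 1
    simp only [hAvdef]
    congr 1
    · funext m; rw [hiY]
    · funext m; rw [hsY]
  -- the conditioning event
  have hEset : {ω | i ω (x z) = 0} = Y ⁻¹' {yv | ic (yv z) = 0} := by
    ext ω
    simp [hiY ω z]
  set Tf : Finset (Fin j → Fin p) := Finset.univ.filter (fun yv => ic (yv z) = 0) with hTfdef
  have hET : {ω | i ω (x z) = 0} = ⋃ yv ∈ Tf, Y ⁻¹' {yv} := by
    rw [hEset]
    ext ω
    simp only [Set.mem_preimage, Set.mem_setOf_eq, Set.mem_iUnion, Set.mem_singleton_iff,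
      hTfdef, Finset.mem_filter, Finset.mem_univ, true_and]
    constructor
    · intro h0
      exact ⟨Y ω, h0, rfl⟩
    · rintro ⟨yv, h0, h1⟩
      rw [h1]
      exact h0
  have hEm : MeasurableSet {ω | i ω (x z) = 0} := by
    rw [hET]
    exact MeasurableSet.biUnion (Set.to_countable _) fun yv _ => hYm yv
  have hPE : ℙ {ω | i ω (x z) = 0} = (Tf.card : ENNReal) * (p : ENNReal)⁻¹ ^ j := by
    rw [hET, measure_biUnion_finset ?_ fun yv _ => hYm yv]
    · rw [Finset.sum_congr rfl fun yv _ => hPy yv, Finset.sum_const, nsmul_eq_mul]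
    · intro a _ c _ hac
      refine Set.disjoint_left.2 fun ω h1 h2 => hac ?_
      simp only [Set.mem_preimage, Set.mem_singleton_iff] at h1 h2
      rw [← h1, ← h2]
  have hPER : (ℙ {ω | i ω (x z) = 0}).toReal = (Tf.card : ℝ) * ((p : ℝ)⁻¹) ^ j := by
    rw [hPE]
    simp [ENNReal.toReal_mul]
  -- restricted integral
  have hR : (∫ ω in {ω | i ω (x z) = 0}, A (fun m => i ω (x m)) (fun m => s ω (x m)))
      = ((p : ℝ)⁻¹) ^ j * ∑ yv ∈ Tf, Av yv := by
    have h1 : ∀ ω, A (fun m => i ω (x m)) (fun m => s ω (x m)) = Av (Y ω) := by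
      intro ω
      simp only [hAvdef]
      congr 1
      · funext m; rw [hiY]
      · funext m; rw [hsY]
    have h2 : ∀ ω, Set.indicator {ω | i ω (x z) = 0}
        (fun ω' => A (fun m => i ω' (x m)) (fun m => s ω' (x m))) ω
        = if ic (Y ω z) = 0 then Av (Y ω) else 0 := by
      intro ω
      by_cases hω : ω ∈ {ω | i ω (x z) = 0}
      · rw [Set.indicator_of_mem hω]
        have hic0 : ic (Y ω z) = 0 := by rw [← hiY]; exact hω
        rw [if_pos hic0, h1]
      · rw [Set.indicator_of_notMem hω]
        have hic0 : ¬ ic (Y ω z) = 0 := by rw [← hiY]; exact hω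
        rw [if_neg hic0]
    calc (∫ a in {ω | i ω (x z) = 0}, A (fun m => i a (x m)) (fun m => s a (x m)))
        = ∫ a, Set.indicator {ω | i ω (x z) = 0}
            (fun ω' => A (fun m => i ω' (x m)) (fun m => s ω' (x m))) a :=
          (integral_indicator hEm).symm
      _ = ∫ ω, (fun yv => if ic (yv z) = 0 then Av yv else 0) (Y ω) := by
          congr 1
          funext ω
          exact h2 ω
      _ = ∑ yv : Fin j → Fin p, ((p : ℝ)⁻¹) ^ j * (if ic (yv z) = 0 then Av yv else 0) :=
          hint (fun yv => if ic (yv z) = 0 then Av yv else 0)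
      _ = ((p : ℝ)⁻¹) ^ j * ∑ yv ∈ Tf, Av yv := by
          rw [← Finset.mul_sum]
          congr 1
          rw [Finset.sum_filter]
  -- combinatorics
  have hq1p : q - 1 < p := by omega
  set p₀ : Fin p := ⟨q - 1, hq1p⟩ with hp₀def
  have hicp₀ : ic p₀ = 0 := by
    simp only [hicdef, hp₀def]
    have he : (q - 1 + 1) = q := by omega
    rw [he, Nat.mod_self, Nat.mul_zero, Nat.zero_div]
  have hscp₀ : sc p₀ = 1 := by
    simp only [hscdef, hp₀def]
    have he : (q - 1 + 1) = q := by omega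
    rw [he, Nat.div_self (by omega : 0 < q)]
    norm_num
  set S : Finset (Fin p) := Finset.univ.filter (fun c => ic c = 0) with hSdef
  set M : Finset (Fin j → Fin p) := Finset.univ.filter (fun yv : Fin j → Fin p => yv z = p₀) with hMdef
  -- sign values
  have hsc_lt : ∀ c : Fin p, (c : ℕ) + 1 < q → sc c = -1 := by
    intro c hc
    simp only [hscdef]
    rw [Nat.div_eq_of_lt hc]
    norm_num
  have hsc_ge : ∀ c : Fin p, q ≤ (c : ℕ) + 1 → sc c = 1 := by
    intro c hc
    have h2 : (c : ℕ) + 1 < 2 * q := by have := c.2; omega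
    simp only [hscdef]
    have he : ((c : ℕ) + 1) / q = 1 := Nat.div_eq_of_lt_le (k := 1) (by omega) (by omega)
    rw [he]
    norm_num
  -- the flip involution on Fin p
  have hp₀S : p₀ ∈ S := by
    simp only [hSdef, Finset.mem_filter, Finset.mem_univ, true_and]
    exact hicp₀
  let flp : Fin p → Fin p := fun c =>
    if hlt : (c : ℕ) + 1 < q then ⟨(c : ℕ) + q, by omega⟩
    else ⟨(c : ℕ) - q, by have := c.2; omega⟩
  have hflp_lt : ∀ c : Fin p, ((c : ℕ) + 1 < q) → (flp c : ℕ) = (c : ℕ) + q := by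
    intro c hc
    simp only [flp, dif_pos hc]
  have hflp_ge : ∀ c : Fin p, ¬ ((c : ℕ) + 1 < q) → (flp c : ℕ) = (c : ℕ) - q := by
    intro c hc
    simp only [flp, dif_neg hc]
  have hmod : ∀ c : Fin p, (c : ℕ) + 1 ≠ q → ((flp c : ℕ) + 1) % q = ((c : ℕ) + 1) % q := by
    intro c hc
    by_cases hlt : (c : ℕ) + 1 < q
    · rw [hflp_lt c hlt]
      have he : (c : ℕ) + q + 1 = (c : ℕ) + 1 + q := by omega
      rw [he, Nat.add_mod_right]
    · rw [hflp_ge c hlt]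
      have he : (c : ℕ) + 1 = ((c : ℕ) - q + 1) + q := by omega
      rw [he, Nat.add_mod_right]
  have hflp_ic : ∀ c : Fin p, (c : ℕ) + 1 ≠ q → ic (flp c) = ic c := by
    intro c hc
    simp only [hicdef]
    rw [hmod c hc]
  have hflp_sc : ∀ c : Fin p, (c : ℕ) + 1 ≠ q → sc (flp c) = - sc c := by
    intro c hc
    by_cases hlt : (c : ℕ) + 1 < q
    · have h1 : sc c = -1 := hsc_lt c hlt
      have h2 : sc (flp c) = 1 := by
        apply hsc_ge
        rw [hflp_lt c hlt]
        omega
      rw [h1, h2]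
      norm_num
    · have h1 : sc c = 1 := hsc_ge c (by omega)
      have h2 : sc (flp c) = -1 := by
        apply hsc_lt
        rw [hflp_ge c hlt]
        have := c.2
        omega
      rw [h1, h2]
  have hflp_nq : ∀ c : Fin p, (c : ℕ) + 1 ≠ q → ((flp c : ℕ) + 1 ≠ q) := by
    intro c hc
    by_cases hlt : (c : ℕ) + 1 < q
    · rw [hflp_lt c hlt]
      omega
    · rw [hflp_ge c hlt]
      have := c.2
      omega
  have hflp_ne : ∀ c : Fin p, (c : ℕ) + 1 ≠ q → flp c ≠ c := by
    intro c hc heq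
    apply_fun (fun t : Fin p => (t : ℕ)) at heq
    by_cases hlt : (c : ℕ) + 1 < q
    · rw [hflp_lt c hlt] at heq
      omega
    · rw [hflp_ge c hlt] at heq
      omega
  have hflp_inv : ∀ c : Fin p, (c : ℕ) + 1 ≠ q → flp (flp c) = c := by
    intro c hc
    apply Fin.ext
    by_cases hlt : (c : ℕ) + 1 < q
    · have h1 := hflp_lt c hlt
      have h2 : ¬ ((flp c : ℕ) + 1 < q) := by
        rw [h1]
        omega
      rw [hflp_ge _ h2, h1]
      omega
    · have h1 := hflp_ge c hlt
      have h2 : (flp c : ℕ) + 1 < q := by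
        rw [h1]
        have := c.2
        omega
      rw [hflp_lt _ h2, h1]
      omega
  have hAvg : ∀ yv : Fin j → Fin p, ((yv z : ℕ) + 1 ≠ q) →
      Av (Function.update yv z (flp (yv z))) = Av yv := by
    intro yv hc
    simp only [hAvdef]
    have hiv : (fun m => ic (Function.update yv z (flp (yv z)) m)) = fun m => ic (yv m) := by
      funext m
      by_cases hm : m = z
      · subst hm
        rw [Function.update_self, hflp_ic _ hc]
      · rw [Function.update_of_ne hm]
    rw [hiv]
    symm
    apply hA
    intro m hm
    rw [Function.update_of_ne hm]
  have hne_iff : ∀ yv : Fin j → Fin p, (¬ yv z = p₀) ↔ ((yv z : ℕ) + 1 ≠ q) := by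
    intro yv
    constructor
    · intro h1 h2
      apply h1
      apply Fin.ext
      simp only [hp₀def]
      omega
    · intro h1 h2
      apply h1
      rw [h2]
      simp only [hp₀def]
      omega
  have fact1 : ∑ yv : Fin j → Fin p, sc (yv z) * Av yv = ∑ yv ∈ M, Av yv := by
    rw [← Finset.sum_filter_add_sum_filter_not Finset.univ (fun yv : Fin j → Fin p => yv z = p₀)
      (fun yv => sc (yv z) * Av yv)]
    have hzero : ∑ yv ∈ Finset.univ.filter (fun yv : Fin j → Fin p => ¬ yv z = p₀),
        sc (yv z) * Av yv = 0 := by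
      apply Finset.sum_involution (fun yv _ => Function.update yv z (flp (yv z)))
      · intro yv hyv
        simp only [Finset.mem_filter, Finset.mem_univ, true_and] at hyv
        have hc := (hne_iff yv).1 hyv
        rw [Function.update_self, hflp_sc _ hc, hAvg yv hc]
        ring
      · intro yv hyv hf0 heq
        simp only [Finset.mem_filter, Finset.mem_univ, true_and] at hyv
        have hc := (hne_iff yv).1 hyv
        have hcg := congrFun heq z
        rw [Function.update_self] at hcg
        exact hflp_ne _ hc hcg
      · intro yv hyv
        simp only [Finset.mem_filter, Finset.mem_univ, true_and] at hyv
        have hc := (hne_iff yv).1 hyv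
        rw [Function.update_self, Function.update_idem, hflp_inv _ hc, Function.update_eq_self]
      · intro yv hyv
        simp only [Finset.mem_filter, Finset.mem_univ, true_and] at hyv ⊢
        have hc := (hne_iff yv).1 hyv
        apply (hne_iff _).2
        rw [Function.update_self]
        exact hflp_nq _ hc
    rw [hzero, add_zero, hMdef]
    apply Finset.sum_congr rfl
    intro yv hyv
    simp only [Finset.mem_filter, Finset.mem_univ, true_and] at hyv
    rw [hyv, hscp₀, one_mul]
  -- relating Tf to S and M
  have hAv_update : ∀ yv ∈ Tf, Av yv = Av (Function.update yv z p₀) := by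
    intro yv hyv
    simp only [hTfdef, Finset.mem_filter, Finset.mem_univ, true_and] at hyv
    simp only [hAvdef]
    have hiv : (fun m => ic (yv m)) = fun m => ic (Function.update yv z p₀ m) := by
      funext m
      by_cases hm : m = z
      · subst hm
        rw [Function.update_self, hicp₀, hyv]
      · rw [Function.update_of_ne hm]
    rw [← hiv]
    apply hA
    intro m hm
    rw [Function.update_of_ne hm]
  have hTfS : Tf = Finset.univ.filter (fun yv : Fin j → Fin p => yv z ∈ S) := by
    apply Finset.filter_congr
    intro yv _
    simp [hSdef]
  have fact2 : ∑ yv ∈ Tf, Av yv = (S.card : ℝ) * ∑ yv ∈ M, Av yv := by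
    calc ∑ yv ∈ Tf, Av yv = ∑ yv ∈ Tf, Av (Function.update yv z p₀) :=
        Finset.sum_congr rfl hAv_update
      _ = ∑ yv ∈ Finset.univ.filter (fun yv : Fin j → Fin p => yv z ∈ S),
            Av (Function.update yv z p₀) := by rw [← hTfS]
      _ = (S.card : ℝ) * ∑ yv ∈ Finset.univ.filter (fun yv : Fin j → Fin p => yv z = p₀),
            Av yv := fiber_sum z p₀ S Av
      _ = (S.card : ℝ) * ∑ yv ∈ M, Av yv := by rw [hMdef]
  have fact3 : (Tf.card : ℝ) = (S.card : ℝ) * (M.card : ℝ) := by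
    have h1 := fiber_sum z p₀ S (fun _ => (1 : ℝ))
    simp only [Finset.sum_const, nsmul_eq_mul, mul_one] at h1
    rw [hTfS, hMdef]
    exact h1
  have fact4 : (p : ℝ) ^ j = (p : ℝ) * (M.card : ℝ) := by
    have h1 := fiber_sum z p₀ (Finset.univ : Finset (Fin p)) (fun _ => (1 : ℝ))
    simp only [Finset.sum_const, nsmul_eq_mul, mul_one, Finset.mem_univ, Finset.filter_true,
      Finset.card_univ, Fintype.card_fun, Fintype.card_fin] at h1
    rw [hMdef]
    exact_mod_cast h1
  -- final algebra
  have hS0 : (S.card : ℝ) ≠ 0 := by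
    have hpos : 0 < S.card := Finset.card_pos.2 ⟨p₀, hp₀S⟩
    exact_mod_cast hpos.ne'
  have hpj0 : (p : ℝ) ^ j ≠ 0 := pow_ne_zero _ hp0R
  have hM0 : (M.card : ℝ) ≠ 0 := by
    intro h0
    rw [h0, mul_zero] at fact4
    exact hpj0 fact4
  have hMv : (M.card : ℝ) = (p : ℝ) ^ j / (p : ℝ) := by
    rw [fact4]
    field_simp
  rw [hL, hR, hPER, ← Finset.mul_sum, fact1, fact2, fact3, hMv]
  exact alg_helper _ _ _ _ hp0R hS0
end

section
/- Let b ≥ 1, p = 2^b − 1, and let v be an integer with 0 ≤ v < 2^{2b}. Let v' = v + 1 and z = ⌊(⌊v'/2^b⌋ + v')/2^b⌋. Then z = ⌊v/p⌋ and (v + z) mod 2^b = v mod p. -/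
theorem stmt15_aux (P' v : ℕ) (hv : v < (P' + 2) ^ 2) :
    ((v + 1) / (P' + 2) + (v + 1)) / (P' + 2) = v / (P' + 1) ∧
    (v + ((v + 1) / (P' + 2) + (v + 1)) / (P' + 2)) % (P' + 2) = v % (P' + 1) := by
  obtain ⟨q, hq⟩ : ∃ q, v / (P' + 1) = q := ⟨_, rfl⟩
  obtain ⟨r, hrdef⟩ : ∃ r, v % (P' + 1) = r := ⟨_, rfl⟩
  rw [hq, hrdef]
  have hr : r < P' + 1 := hrdef ▸ Nat.mod_lt _ (by omega)
  have hqr : v = (P' + 1) * q + r := by rw [← hq, ← hrdef, Nat.div_add_mod]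
  have hqle : q ≤ P' + 3 := by nlinarith
  rcases le_or_gt q (r + 1) with hc | hc
  · have ht : (v + 1) / (P' + 2) = q := by
      apply Nat.div_eq_of_lt_le
      · nlinarith
      · nlinarith
    have hz : (q + (v + 1)) / (P' + 2) = q := by
      apply Nat.div_eq_of_lt_le
      · nlinarith
      · nlinarith
    rw [ht, hz]
    refine ⟨rfl, ?_⟩
    have : v + q = (P' + 2) * q + r := by nlinarith
    rw [this, Nat.mul_add_mod, Nat.mod_eq_of_lt (by omega)]
  · obtain ⟨q', rfl⟩ : ∃ q', q = q' + 1 := ⟨q - 1, by omega⟩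
    have ht : (v + 1) / (P' + 2) = q' := by
      apply Nat.div_eq_of_lt_le
      · nlinarith
      · nlinarith
    have hz : (q' + (v + 1)) / (P' + 2) = q' + 1 := by
      apply Nat.div_eq_of_lt_le
      · nlinarith
      · nlinarith
    rw [ht, hz]
    refine ⟨rfl, ?_⟩
    have : v + (q' + 1) = (P' + 2) * (q' + 1) + r := by nlinarith
    rw [this, Nat.mul_add_mod, Nat.mod_eq_of_lt (by omega)]

/-- Algorithm 4 (branch-free division and modulus with a Mersenne prime): for `b ≥ 1`,
`p = 2^b - 1` and `0 ≤ v < 2^(2b)`, setting `v' = v + 1` and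
`z = ⌊(⌊v'/2^b⌋ + v')/2^b⌋`, we have `z = ⌊v/p⌋` and `(v + z) mod 2^b = v mod p`. -/
theorem stmt15 (b v : ℕ) (hb : 1 ≤ b) (hv : v < 2 ^ (2 * b)) :
    ((v + 1) / 2 ^ b + (v + 1)) / 2 ^ b = v / (2 ^ b - 1) ∧
    (v + ((v + 1) / 2 ^ b + (v + 1)) / 2 ^ b) % 2 ^ b = v % (2 ^ b - 1) := by
  have h2 : 2 ≤ 2 ^ b := by
    calc 2 = 2 ^ 1 := rfl
    _ ≤ 2 ^ b := Nat.pow_le_pow_right (by omega) hb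
  obtain ⟨P', hP⟩ : ∃ P', 2 ^ b = P' + 2 := ⟨2 ^ b - 2, by omega⟩
  have hvv : v < (P' + 2) ^ 2 := by
    rwa [two_mul, pow_add, hP, ← sq] at hv
  have := stmt15_aux P' v hvv
  rw [hP]
  have h1 : P' + 2 - 1 = P' + 1 := rfl
  rw [h1]
  exact stmt15_aux P' v hvv
end

section
/- Let b > ℓ ≥ 1, p = 2^b − 1, r = 2^ℓ, and let μ : [2^b] → [r] be any function such that every fiber μ^{-1}(i) has exactly 2^{b−ℓ} elements and μ(2^b − 1) = r − 1. If V and W are independent random variables, each uniformly distributed on [p] (as holds for h(x), h(y) with x ≠ y distinct keys and h a 2-universal hash function into [p]), then Pr[μ(V) = μ(W)] = (1 + (r−1)/p²)/r. -/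
open MeasureTheory ProbabilityTheory

/-- Eq. (4): with `b > ℓ ≥ 1`, `p = 2^b - 1`, `r = 2^ℓ`, `μ : [2^b] → [r]` a
bit-selection map (all fibers of size `2^(b-ℓ)` and `μ(2^b - 1) = r - 1`), and `V`, `W`
independent, each uniform on `[p]`: `Pr[μ(V) = μ(W)] = (1 + (r-1)/p²)/r`. -/
theorem stmt17
    {Ω : Type*} [MeasureSpace Ω] [IsProbabilityMeasure (ℙ : Measure Ω)]
    (b ℓ p r : ℕ) (hℓ1 : 1 ≤ ℓ) (hℓb : ℓ < b) (hp : p = 2 ^ b - 1) (hr : r = 2 ^ ℓ)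
    (μsel : ℕ → ℕ)
    (hfib : ∀ i < r,
      ((Finset.range (2 ^ b)).filter fun v => μsel v = i).card = 2 ^ (b - ℓ))
    (htop : μsel (2 ^ b - 1) = r - 1)
    (V W : Ω → ℕ) (hVmeas : Measurable V) (hWmeas : Measurable W)
    (hVlt : ∀ ω, V ω < p) (hWlt : ∀ ω, W ω < p)
    (hjoint : ∀ y < p, ∀ z < p,
      ℙ {ω | V ω = y ∧ W ω = z} = (p : ENNReal)⁻¹ * (p : ENNReal)⁻¹) :
    (ℙ {ω | μsel (V ω) = μsel (W ω)}).toReal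
      = (1 + ((r : ℝ) - 1) / (p : ℝ) ^ 2) / r := by
  set s := 2 ^ (b - ℓ) with hs
  have hrs : r * s = 2 ^ b := by
    rw [hr, hs, ← pow_add]; congr 1; omega
  have hs2 : 2 ≤ s := by
    calc 2 = 2 ^ 1 := rfl
    _ ≤ s := Nat.pow_le_pow_right (by norm_num) (by omega)
  have hr2 : 2 ≤ r := by
    rw [hr]
    calc 2 = 2 ^ 1 := rfl
    _ ≤ 2 ^ ℓ := Nat.pow_le_pow_right (by norm_num) hℓ1
  have h2b : 4 ≤ 2 ^ b := by
    calc 4 ≤ r * s := Nat.mul_le_mul hr2 hs2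
    _ = 2 ^ b := hrs
  have hp1 : p + 1 = 2 ^ b := by omega
  have hppos : 0 < p := by omega
  -- μsel maps [2^b] into [r]
  have hdisjfib : ∀ i ∈ Finset.range r, ∀ j ∈ Finset.range r, i ≠ j →
      Disjoint ((Finset.range (2 ^ b)).filter fun v => μsel v = i)
        ((Finset.range (2 ^ b)).filter fun v => μsel v = j) := by
    intro i _ j _ hij
    rw [Finset.disjoint_left]
    intro a ha hb
    simp only [Finset.mem_filter] at ha hb
    exact hij (ha.2 ▸ hb.2 ▸ rfl)
  have hcov : (Finset.range r).biUnion
      (fun i => (Finset.range (2 ^ b)).filter fun v => μsel v = i)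
      = Finset.range (2 ^ b) := by
    apply Finset.eq_of_subset_of_card_le
    · intro x hx
      simp only [Finset.mem_biUnion, Finset.mem_filter] at hx
      obtain ⟨i, _, hx, _⟩ := hx
      exact hx
    · rw [Finset.card_biUnion hdisjfib]
      rw [Finset.sum_congr rfl (fun i hi => hfib i (Finset.mem_range.mp hi))]
      simp [Finset.sum_const, hrs]
  have hμlt : ∀ y, y < 2 ^ b → μsel y < r := by
    intro y hy
    have hy' : y ∈ (Finset.range r).biUnion
        (fun i => (Finset.range (2 ^ b)).filter fun v => μsel v = i) := by
      rw [hcov]; exact Finset.mem_range.mpr hy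
    simp only [Finset.mem_biUnion, Finset.mem_filter, Finset.mem_range] at hy'
    obtain ⟨i, hi, _, hiy⟩ := hy'
    omega
  have hμp : μsel p = r - 1 := by rw [hp]; exact htop
  -- fiber sizes within [p]
  have hfibp : ∀ i < r, ((Finset.range p).filter fun v => μsel v = i).card
      = if i = r - 1 then s - 1 else s := by
    intro i hi
    have h1 := hfib i hi
    have hrange : Finset.range (2 ^ b) = insert p (Finset.range p) := by
      rw [← hp1, Finset.range_add_one]
    rw [hrange, Finset.filter_insert] at h1
    by_cases hc : i = r - 1
    · rw [if_pos (by rw [hμp, hc])] at h1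
      rw [Finset.card_insert_of_notMem (by simp)] at h1
      rw [if_pos hc]; omega
    · rw [if_neg (by rw [hμp]; omega)] at h1
      rw [if_neg hc]; exact h1
  -- the set of matching pairs
  set P := (Finset.range p ×ˢ Finset.range p).filter (fun yz => μsel yz.1 = μsel yz.2)
    with hP
  have hPeq : P = (Finset.range r).biUnion (fun i =>
      ((Finset.range p).filter fun v => μsel v = i) ×ˢ
      ((Finset.range p).filter fun v => μsel v = i)) := by
    ext ⟨y, z⟩
    simp only [hP, Finset.mem_biUnion, Finset.mem_product, Finset.mem_filter,
      Finset.mem_range]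
    constructor
    · rintro ⟨⟨hy, hz⟩, he⟩
      exact ⟨μsel y, hμlt y (by omega), ⟨hy, rfl⟩, hz, he.symm⟩
    · rintro ⟨i, hi, ⟨hy, hyi⟩, hz, hzi⟩
      exact ⟨⟨hy, hz⟩, by rw [hyi, hzi]⟩
  have hPcard : P.card = (s - 1) * (s - 1) + (r - 1) * (s * s) := by
    have hdisj' : ∀ i ∈ Finset.range r, ∀ j ∈ Finset.range r, i ≠ j →
        Disjoint (((Finset.range p).filter fun v => μsel v = i) ×ˢ
          ((Finset.range p).filter fun v => μsel v = i))
          (((Finset.range p).filter fun v => μsel v = j) ×ˢ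
          ((Finset.range p).filter fun v => μsel v = j)) := by
      intro i _ j _ hij
      rw [Finset.disjoint_left]
      rintro ⟨y, z⟩ ha hb
      simp only [Finset.mem_product, Finset.mem_filter] at ha hb
      exact hij (ha.1.2 ▸ hb.1.2 ▸ rfl)
    rw [hPeq, Finset.card_biUnion hdisj']
    have hterm : ∀ i ∈ Finset.range r,
        (((Finset.range p).filter fun v => μsel v = i) ×ˢ
          ((Finset.range p).filter fun v => μsel v = i)).card
        = (if i = r - 1 then s - 1 else s) * (if i = r - 1 then s - 1 else s) := by
      intro i hi
      rw [Finset.card_product, hfibp i (Finset.mem_range.mp hi)]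
    rw [Finset.sum_congr rfl hterm]
    have hmem : r - 1 ∈ Finset.range r := by simp; omega
    rw [← Finset.add_sum_erase _ _ hmem, if_pos rfl]
    rw [Finset.sum_congr rfl (fun i hi => by
      rw [if_neg (Finset.ne_of_mem_erase hi)])]
    rw [Finset.sum_const, Finset.card_erase_of_mem hmem, Finset.card_range,
      smul_eq_mul]
  -- decompose the event
  have hSeq : {ω | μsel (V ω) = μsel (W ω)}
      = ⋃ yz ∈ P, {ω | V ω = yz.1 ∧ W ω = yz.2} := by
    ext ω
    simp only [Set.mem_setOf_eq, Set.mem_iUnion, exists_prop]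
    constructor
    · intro h
      refine ⟨(V ω, W ω), ?_, rfl, rfl⟩
      simp only [hP, Finset.mem_filter, Finset.mem_product, Finset.mem_range]
      exact ⟨⟨hVlt ω, hWlt ω⟩, h⟩
    · rintro ⟨⟨y, z⟩, hyz, hv, hw⟩
      simp only [hP, Finset.mem_filter] at hyz
      rw [hv, hw]; exact hyz.2
  have hmeasA : ∀ yz : ℕ × ℕ, MeasurableSet {ω | V ω = yz.1 ∧ W ω = yz.2} := by
    intro yz
    exact (hVmeas (measurableSet_singleton yz.1)).inter
      (hWmeas (measurableSet_singleton yz.2))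
  have hdisjA : (↑P : Set (ℕ × ℕ)).PairwiseDisjoint
      (fun yz => {ω | V ω = yz.1 ∧ W ω = yz.2}) := by
    intro a _ c _ hac
    apply Set.disjoint_left.mpr
    rintro ω ⟨h1, h2⟩ ⟨h3, h4⟩
    exact hac (Prod.ext (h1.symm.trans h3) (h2.symm.trans h4))
  have hmeasure : ℙ {ω | μsel (V ω) = μsel (W ω)}
      = (P.card : ENNReal) * ((p : ENNReal)⁻¹ * (p : ENNReal)⁻¹) := by
    rw [hSeq, measure_biUnion_finset hdisjA (fun yz _ => hmeasA yz)]
    have : ∀ yz ∈ P, ℙ {ω | V ω = yz.1 ∧ W ω = yz.2}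
        = (p : ENNReal)⁻¹ * (p : ENNReal)⁻¹ := by
      intro yz hyz
      simp only [hP, Finset.mem_filter, Finset.mem_product, Finset.mem_range] at hyz
      exact hjoint yz.1 hyz.1.1 yz.2 hyz.1.2
    rw [Finset.sum_congr rfl this, Finset.sum_const, nsmul_eq_mul]
  rw [hmeasure, hPcard]
  have hpne : (p : ENNReal) ≠ 0 := by
    simp only [ne_eq, Nat.cast_eq_zero]; omega
  simp only [ENNReal.toReal_mul, ENNReal.toReal_inv, ENNReal.toReal_natCast]
  have hcast : (((s - 1) * (s - 1) + (r - 1) * (s * s) : ℕ) : ℝ)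
      = ((s : ℝ) - 1) * ((s : ℝ) - 1) + ((r : ℝ) - 1) * ((s : ℝ) * (s : ℝ)) := by
    push_cast [Nat.cast_sub (by omega : 1 ≤ s), Nat.cast_sub (by omega : 1 ≤ r)]
    ring
  rw [hcast]
  have hpr : (p : ℝ) = (r : ℝ) * (s : ℝ) - 1 := by
    have : ((p : ℝ) + 1) = (r : ℝ) * (s : ℝ) := by
      have := hrs
      have h2 : (p + 1 : ℕ) = r * s := by omega
      exact_mod_cast congrArg (Nat.cast : ℕ → ℝ) h2
    linarith
  have hrne : (r : ℝ) ≠ 0 := by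
    have : (0:ℝ) < (r:ℝ) := by exact_mod_cast (by omega : 0 < r)
    linarith
  have hpne' : (p : ℝ) ≠ 0 := by
    have : (0:ℝ) < (p:ℝ) := by exact_mod_cast hppos
    linarith
  have hrsne : (r : ℝ) * (s : ℝ) - 1 ≠ 0 := hpr ▸ hpne'
  rw [hpr]
  field_simp
  field_simp
  ring
end

section
/- Let Q be a finite set of size q ≥ 1, let r ≥ 1, and let μ : Q → [r] be a most uniform map. Let a ∈ [r] be the unique value with r dividing q + a. If V and W are independent random variables, each uniformly distributed on Q (as holds for h(x), h(y) with x ≠ y distinct keys and h a 2-universal hash function into Q), then Pr[μ(V) = μ(W)] = (1 + a(r−a)/q²)/r ≤ (1 + (r/(2q))²)/r. -/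
open MeasureTheory ProbabilityTheory

/-- Eq. (21): let `Q` be a finite set of size `q ≥ 1`, `r ≥ 1`, `μ : Q → [r]` a most
uniform map, and `a ∈ [r]` the unique value with `r ∣ q + a`. If `V`, `W` are
independent uniform on `Q`, then
`Pr[μ(V) = μ(W)] = (1 + a(r-a)/q²)/r ≤ (1 + (r/(2q))²)/r`. -/
theorem stmt18
    {Ω : Type*} [MeasureSpace Ω] [IsProbabilityMeasure (ℙ : Measure Ω)]
    {Q : Type*} [Fintype Q] [MeasurableSpace Q] [MeasurableSingletonClass Q]
    (q r a : ℕ) (hq : q = Fintype.card Q) (hq1 : 1 ≤ q) (hr : 1 ≤ r)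
    (ha : a < r) (hdvd : r ∣ q + a)
    (μmap : Q → ℕ) (hμr : ∀ x : Q, μmap x < r)
    (hfib : ∀ i < r,
      (Finset.univ.filter fun x : Q => μmap x = i).card = q / r ∨
      (Finset.univ.filter fun x : Q => μmap x = i).card = (q + r - 1) / r)
    (V W : Ω → Q) (hVmeas : Measurable V) (hWmeas : Measurable W)
    (hjoint : ∀ y z : Q,
      ℙ {ω | V ω = y ∧ W ω = z} = (q : ENNReal)⁻¹ * (q : ENNReal)⁻¹) :
    (ℙ {ω | μmap (V ω) = μmap (W ω)}).toReal
        = (1 + (a : ℝ) * ((r : ℝ) - a) / (q : ℝ) ^ 2) / r ∧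
    (1 + (a : ℝ) * ((r : ℝ) - a) / (q : ℝ) ^ 2) / r
        ≤ (1 + ((r : ℝ) / (2 * q)) ^ 2) / r := by
  classical
  have hq0 : (0:ℝ) < q := by exact_mod_cast hq1
  have hr0 : (0:ℝ) < r := by exact_mod_cast hr
  have hrn : 0 < r := hr
  obtain ⟨m, hm⟩ := hdvd
  set c : ℕ → ℕ := fun i => (Finset.univ.filter fun x : Q => μmap x = i).card with hc
  set f : ℕ := q / r with hf
  set g : ℕ := (q + r - 1) / r with hg
  set S : Finset (Q × Q) := Finset.univ.filter (fun p => μmap p.1 = μmap p.2) with hS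
  set N : ℕ := ∑ i ∈ Finset.range r, c i * c i with hN
  -- sum of fiber cards is q
  have hsum : ∑ i ∈ Finset.range r, c i = q := by
    rw [hq, ← Finset.card_univ]
    exact (Finset.card_eq_sum_card_fiberwise (fun x _ => Finset.mem_range.mpr (hμr x))).symm
  -- card of S is sum of squares
  have hcardS : S.card = N := by
    rw [hN, Finset.card_eq_sum_card_fiberwise
      (f := fun p : Q × Q => μmap p.1) (t := Finset.range r)
      (fun p _ => Finset.mem_range.mpr (hμr p.1))]
    refine Finset.sum_congr rfl fun i _ => ?_
    have : (S.filter fun p : Q × Q => μmap p.1 = i)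
        = (Finset.univ.filter fun x : Q => μmap x = i) ×ˢ
          (Finset.univ.filter fun x : Q => μmap x = i) := by
      ext p
      simp only [hS, Finset.mem_filter, Finset.mem_univ, true_and, Finset.mem_product]
      constructor
      · rintro ⟨h1, h2⟩; exact ⟨h2, h1 ▸ h2⟩
      · rintro ⟨h1, h2⟩; exact ⟨h1.trans h2.symm, h1⟩
    rw [this, Finset.card_product]
  -- per-fiber identity
  have hterm : ∀ i ∈ Finset.range r, c i * c i + f * g = c i * (f + g) := by
    intro i hi
    rcases hfib i (Finset.mem_range.mp hi) with h | h
    · rw [show c i = f from h]; ring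
    · rw [show c i = g from h]; ring
  have hSsum : N + r * (f * g) = (f + g) * q := by
    have h2 := Finset.sum_congr rfl hterm
    rw [Finset.sum_add_distrib, Finset.sum_const, Finset.card_range, smul_eq_mul,
      ← Finset.sum_mul, hsum] at h2
    rw [hN]; linarith [h2]
  have hm1 : 1 ≤ m := by
    rcases Nat.eq_zero_or_pos m with h | h
    · subst h; simp at hm; omega
    · exact h
  have hqR : (q:ℝ) = (r:ℝ) * m - a := by
    have : ((q:ℝ) + a) = r * m := by exact_mod_cast hm
    linarith
  -- key identity
  have hkey : (r:ℝ) * N = (q:ℝ)^2 + (a:ℝ) * ((r:ℝ) - a) := by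
    rcases Nat.eq_zero_or_pos a with rfl | ha1
    · -- a = 0 : f = g = m
      have hq' : q = r * m := by omega
      have hfval : f = m := by rw [hf, hq', Nat.mul_div_cancel_left _ hrn]
      have hgval : g = m := by
        have h1 : q + r - 1 = r * m + (r - 1) := by omega
        rw [hg, h1, Nat.mul_add_div hrn, Nat.div_eq_of_lt (by omega)]; omega
      rw [hfval, hgval] at hSsum
      have hS' : (N:ℝ) + r * (m * m) = ((m:ℝ) + m) * q := by exact_mod_cast hSsum
      push_cast
      linear_combination (r:ℝ) * hS' + ((r:ℝ) * m - q) * hqR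
    · -- a ≥ 1 : f = m - 1, g = m
      have hmm : r * m = r * (m - 1) + r := by
        conv_lhs => rw [show m = (m - 1) + 1 by omega]
        ring
      have hfval : f = m - 1 := by
        have h1 : q = r * (m - 1) + (r - a) := by omega
        rw [hf, h1, Nat.mul_add_div hrn, Nat.div_eq_of_lt (by omega)]; omega
      have hgval : g = m := by
        have h1 : q + r - 1 = r * m + (r - a - 1) := by omega
        rw [hg, h1, Nat.mul_add_div hrn, Nat.div_eq_of_lt (by omega)]; omega
      rw [hfval, hgval] at hSsum
      have hS' : (N:ℝ) + r * (((m:ℝ) - 1) * m) = (((m:ℝ) - 1) + m) * q := by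
        have := hSsum
        have hcast : ((m - 1 : ℕ) : ℝ) = (m:ℝ) - 1 := by
          rw [Nat.cast_sub hm1]; norm_num
        exact_mod_cast by push_cast [hcast] at this ⊢; exact_mod_cast this
      linear_combination (r:ℝ) * hS' + (-(q:ℝ) + r * m - r + a) * hqR
  -- measure computation
  have hmeasp : ∀ p : Q × Q, MeasurableSet {ω | V ω = p.1 ∧ W ω = p.2} := by
    intro p
    have : {ω | V ω = p.1 ∧ W ω = p.2} = V ⁻¹' {p.1} ∩ W ⁻¹' {p.2} := rfl
    rw [this]
    exact (hVmeas (measurableSet_singleton p.1)).inter (hWmeas (measurableSet_singleton p.2))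
  have hEeq : {ω | μmap (V ω) = μmap (W ω)}
      = ⋃ p ∈ S, {ω | V ω = p.1 ∧ W ω = p.2} := by
    ext ω
    simp only [Set.mem_setOf_eq, Set.mem_iUnion, hS, Finset.mem_filter, Finset.mem_univ,
      true_and, exists_prop]
    constructor
    · intro h; exact ⟨(V ω, W ω), h, rfl, rfl⟩
    · rintro ⟨p, hp, h1, h2⟩; rw [h1, h2]; exact hp
  have hdisj : (↑S : Set (Q × Q)).PairwiseDisjoint
      fun p => {ω | V ω = p.1 ∧ W ω = p.2} := by
    intro p hp p' hp' hne
    refine Set.disjoint_left.mpr ?_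
    rintro ω ⟨h1, h2⟩ ⟨h3, h4⟩
    exact hne (Prod.ext (h1.symm.trans h3) (h2.symm.trans h4))
  have hP : ℙ {ω | μmap (V ω) = μmap (W ω)}
      = (S.card : ENNReal) * ((q : ENNReal)⁻¹ * (q : ENNReal)⁻¹) := by
    rw [hEeq, measure_biUnion_finset hdisj (fun p _ => hmeasp p)]
    simp_rw [hjoint]
    rw [Finset.sum_const, nsmul_eq_mul]
  have hPr : (ℙ {ω | μmap (V ω) = μmap (W ω)}).toReal
      = (N : ℝ) * ((q:ℝ)⁻¹ * (q:ℝ)⁻¹) := by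
    rw [hP, hcardS]
    simp [ENNReal.toReal_mul, ENNReal.toReal_inv]
  constructor
  · rw [hPr]
    field_simp
    linear_combination hkey
  · gcongr
    rw [div_pow, mul_pow, div_le_div_iff₀ (by positivity) (by positivity)]
    nlinarith [sq_nonneg ((r:ℝ) - 2 * a), sq_nonneg (q:ℝ), hq0]
end
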